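/- arXiv:1910.04900 — 6 statements merged into one kernel-verified Lean document; each statement's English description precedes it below -/
import Mathlib

section
/- Let μ ≤ 0 and let Z be a Gaussian random variable with mean μ and variance 1. Define the one-sided p-value P = Φ(−Z), where Φ is the standard normal CDF. Then P is uniformly conservative: for all x, τ ∈ [0,1], ℙ(P ≤ x·τ) ≤ x · ℙ(P ≤ τ). -/
open MeasureTheory ProbabilityTheory Real Set Filter

/-- The standard normal CDF `Φ`. -/
noncomputable def stdNormalCDF (x : ℝ) : ℝ :=
  (ProbabilityTheory.gaussianReal 0 1 (Set.Iic x)).toReal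

noncomputable def npdf (x : ℝ) : ℝ := (Real.sqrt (2 * Real.pi))⁻¹ * Real.exp (-(x ^ 2 / 2))

lemma npdf_eq : npdf = gaussianPDFReal 0 1 := by
  ext x
  rw [npdf, gaussianPDFReal]
  norm_num
  left; ring

lemma npdf_pos (x : ℝ) : 0 < npdf x := by
  rw [npdf_eq]; exact gaussianPDFReal_pos 0 1 x one_ne_zero

lemma npdf_continuous : Continuous npdf := by
  unfold npdf
  continuity

lemma npdf_integrable : Integrable npdf := by
  rw [npdf_eq]; exact integrable_gaussianPDFReal 0 1

lemma npdf_hasDerivAt (x : ℝ) : HasDerivAt npdf (-x * npdf x) x := by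
  unfold npdf
  have h : HasDerivAt (fun t : ℝ => -(t ^ 2 / 2)) (-x) x := by
    have := ((hasDerivAt_pow 2 x).div_const 2).neg
    simp at this; exact this
  have := (h.exp).const_mul (Real.sqrt (2 * Real.pi))⁻¹
  exact this.congr_deriv (by ring)

lemma stdNormalCDF_eq (x : ℝ) : stdNormalCDF x = ∫ t in Iic x, npdf t := by
  rw [stdNormalCDF, gaussianReal_apply_eq_integral 0 one_ne_zero, npdf_eq,
    ENNReal.toReal_ofReal]
  exact setIntegral_nonneg measurableSet_Iic fun t _ => gaussianPDFReal_nonneg 0 1 t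

lemma stdNormalCDF_sub (a b : ℝ) :
    stdNormalCDF b - stdNormalCDF a = ∫ t in a..b, npdf t := by
  rw [stdNormalCDF_eq, stdNormalCDF_eq]
  exact intervalIntegral.integral_Iic_sub_Iic npdf_integrable.integrableOn
    npdf_integrable.integrableOn

lemma stdNormalCDF_mono : Monotone stdNormalCDF := by
  intro a b hab
  exact ENNReal.toReal_mono (measure_ne_top _ _) (measure_mono (Iic_subset_Iic.2 hab))

lemma stdNormalCDF_strictMono : StrictMono stdNormalCDF := by
  intro a b hab
  have h : 0 < ∫ t in a..b, npdf t :=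
    intervalIntegral.intervalIntegral_pos_of_pos
      (npdf_continuous.intervalIntegrable a b) (fun t => npdf_pos t) hab
  have := stdNormalCDF_sub a b
  linarith

lemma stdNormalCDF_pos (x : ℝ) : 0 < stdNormalCDF x := by
  have h1 : 0 ≤ stdNormalCDF (x - 1) := ENNReal.toReal_nonneg
  have h2 := stdNormalCDF_strictMono (show x - 1 < x by linarith)
  linarith

lemma stdNormalCDF_le_one (x : ℝ) : stdNormalCDF x ≤ 1 := by
  rw [stdNormalCDF]
  refine ENNReal.toReal_le_of_le_ofReal one_pos.le ?_
  simpa using prob_le_one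

lemma stdNormalCDF_lt_one (x : ℝ) : stdNormalCDF x < 1 :=
  lt_of_lt_of_le (stdNormalCDF_strictMono (show x < x + 1 by linarith))
    (stdNormalCDF_le_one _)

lemma stdNormalCDF_hasDerivAt (x : ℝ) : HasDerivAt stdNormalCDF (npdf x) x := by
  have key : ∀ y, stdNormalCDF y = stdNormalCDF 0 + ∫ t in (0:ℝ)..y, npdf t := by
    intro y
    have := stdNormalCDF_sub 0 y
    linarith
  have h : HasDerivAt (fun y => stdNormalCDF 0 + ∫ t in (0:ℝ)..y, npdf t) (npdf x) x := by
    refine HasDerivAt.const_add _ ?_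
    exact intervalIntegral.integral_hasDerivAt_right
      (npdf_continuous.intervalIntegrable 0 x)
      (npdf_continuous.aestronglyMeasurable.stronglyMeasurableAtFilter)
      npdf_continuous.continuousAt
  rw [funext key]
  exact h

lemma stdNormalCDF_continuous : Continuous stdNormalCDF := by
  have : Differentiable ℝ stdNormalCDF := fun x => (stdNormalCDF_hasDerivAt x).differentiableAt
  exact this.continuous

lemma stdNormalCDF_eq_cdf : stdNormalCDF = cdf (gaussianReal 0 1) := by
  ext x
  rw [stdNormalCDF, cdf_eq_real, measureReal_def]

lemma stdNormalCDF_tendsto_atBot : Tendsto stdNormalCDF atBot (nhds 0) := by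
  rw [stdNormalCDF_eq_cdf]; exact tendsto_cdf_atBot _

lemma stdNormalCDF_tendsto_atTop : Tendsto stdNormalCDF atTop (nhds 1) := by
  rw [stdNormalCDF_eq_cdf]; exact tendsto_cdf_atTop _

lemma stdNormalCDF_surj {t : ℝ} (h0 : 0 < t) (h1 : t < 1) : ∃ c, stdNormalCDF c = t := by
  obtain ⟨lo, hlo⟩ : ∃ lo, stdNormalCDF lo < t := by
    have := stdNormalCDF_tendsto_atBot.eventually (eventually_lt_nhds h0)
    exact this.exists
  obtain ⟨hi, hhi⟩ : ∃ hi, t < stdNormalCDF hi := by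
    have := stdNormalCDF_tendsto_atTop.eventually (eventually_gt_nhds h1)
    exact this.exists
  have hle : lo ≤ hi := by
    by_contra hlt
    push_neg at hlt
    exact absurd (stdNormalCDF_mono hlt.le) (by linarith)
  obtain ⟨c, _, hc⟩ := intermediate_value_Icc hle stdNormalCDF_continuous.continuousOn
    ⟨hlo.le, hhi.le⟩
  exact ⟨c, hc⟩

lemma integrable_mul_npdf : Integrable (fun t : ℝ => t * npdf t) := by
    unfold npdf
    have := integrable_mul_exp_neg_mul_sq (b := (1:ℝ)/2) (by norm_num)
    have h2 := this.const_mul (Real.sqrt (2 * Real.pi))⁻¹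
    refine h2.congr ?_
    filter_upwards with t
    rw [show -(1/2:ℝ) * t^2 = -(t^2/2) by ring]
    ring

lemma integral_mul_npdf_Iic (x : ℝ) : ∫ t in Iic x, t * npdf t = -npdf x := by
  have hint : Integrable (fun t : ℝ => t * npdf t) := integrable_mul_npdf
  have := integral_Iic_of_hasDerivAt_of_tendsto' (a := x) (m := 0)
    (f := fun t => -npdf t) (f' := fun t => t * npdf t)
    (fun t _ => by have := (npdf_hasDerivAt t).neg; simp at this; exact this)
    hint.integrableOn ?_
  · simpa using this
  · have hsq : Tendsto (fun t : ℝ => t ^ 2) atBot atTop := by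
      have : Tendsto (fun t : ℝ => (-t) ^ 2) atBot atTop :=
        (tendsto_pow_atTop two_ne_zero).comp tendsto_neg_atBot_atTop
      simpa using this
    have h1 : Tendsto (fun t : ℝ => -(t ^ 2 / 2)) atBot atBot :=
      tendsto_neg_atTop_atBot.comp (hsq.atTop_div_const two_pos)
    have h2 : Tendsto npdf atBot (nhds 0) := by
      have := (Real.tendsto_exp_atBot.comp h1).const_mul (Real.sqrt (2 * Real.pi))⁻¹
      unfold npdf
      simpa [Function.comp] using this
    simpa using h2.neg

lemma mills (x : ℝ) : 0 ≤ x * stdNormalCDF x + npdf x := by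
  rcases le_or_gt 0 x with hx | hx
  · have := stdNormalCDF_pos x
    have := npdf_pos x
    nlinarith
  · have hΦ : stdNormalCDF x ≤ ∫ t in Iic x, (t / x) * npdf t := by
      rw [stdNormalCDF_eq]
      refine setIntegral_mono_on npdf_integrable.integrableOn ?_ measurableSet_Iic ?_
      · exact ((integrable_mul_npdf.div_const x).congr
          (by filter_upwards with t; ring)).integrableOn
      · intro t ht
        have h1 : (1:ℝ) ≤ t / x := by
          rw [le_div_iff_of_neg hx]
          simpa using ht
        nlinarith [npdf_pos t]
    have heq : ∫ t in Iic x, (t / x) * npdf t = -npdf x / x := by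
      have : ∫ t in Iic x, (t / x) * npdf t = (∫ t in Iic x, t * npdf t) / x := by
        rw [← integral_div]
        congr 1
        ext t
        ring
      rw [this, integral_mul_npdf_Iic]
    rw [heq] at hΦ
    rw [le_div_iff_of_neg hx] at hΦ
    nlinarith

lemma hazard_antitone : Antitone (fun x => npdf x / stdNormalCDF x) := by
  have hdiff : ∀ x : ℝ, HasDerivAt (fun x => npdf x / stdNormalCDF x)
      ((-x * npdf x * stdNormalCDF x - npdf x * npdf x) / stdNormalCDF x ^ 2) x := by
    intro x
    exact (npdf_hasDerivAt x).div (stdNormalCDF_hasDerivAt x) (stdNormalCDF_pos x).ne'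
  refine antitone_of_deriv_nonpos (fun x => (hdiff x).differentiableAt) ?_
  intro x
  rw [(hdiff x).deriv]
  apply div_nonpos_of_nonpos_of_nonneg _ (sq_nonneg _)
  have h1 := mills x
  have h2 := npdf_pos x
  nlinarith

lemma ratio_monotone {m : ℝ} (hm : m ≤ 0) :
    Monotone (fun q => stdNormalCDF (m + q) / stdNormalCDF q) := by
  have hdiff : ∀ q : ℝ, HasDerivAt (fun q => stdNormalCDF (m + q) / stdNormalCDF q)
      ((npdf (m + q) * stdNormalCDF q - stdNormalCDF (m + q) * npdf q) / stdNormalCDF q ^ 2)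
      q := by
    intro q
    have h1 : HasDerivAt (fun q : ℝ => stdNormalCDF (m + q)) (npdf (m + q)) q := by
      have := (stdNormalCDF_hasDerivAt (m + q)).comp q
        ((hasDerivAt_id q).const_add m)
      simp at this; exact this
    exact h1.div (stdNormalCDF_hasDerivAt q) (stdNormalCDF_pos q).ne'
  refine monotone_of_deriv_nonneg (fun q => (hdiff q).differentiableAt) ?_
  intro q
  rw [(hdiff q).deriv]
  apply div_nonneg _ (sq_nonneg _)
  have hr := hazard_antitone (show m + q ≤ q by linarith)
  simp only at hr
  have h1 := stdNormalCDF_pos q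
  have h2 := stdNormalCDF_pos (m + q)
  have h3 := npdf_pos q
  have h4 := npdf_pos (m + q)
  rw [div_le_div_iff₀ h1 h2] at hr
  nlinarith

lemma key_ineq {m a b : ℝ} (hm : m ≤ 0) (hab : a ≤ b) :
    stdNormalCDF (m + a) * stdNormalCDF b ≤ stdNormalCDF a * stdNormalCDF (m + b) := by
  have h := ratio_monotone hm hab
  simp only at h
  have h1 := stdNormalCDF_pos a
  have h2 := stdNormalCDF_pos b
  rw [div_le_div_iff₀ h1 h2] at h
  linarith

lemma gaussianReal_Ici (m c : ℝ) :
    gaussianReal m 1 (Ici (-c)) = ENNReal.ofReal (stdNormalCDF (m + c)) := by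
  have h1 : gaussianReal m 1 = (gaussianReal 0 1).map (· + m) := by
    rw [gaussianReal_map_add_const, zero_add]
  have h2 : ((gaussianReal 0 1).map (· + m)) (Ici (-c)) = gaussianReal 0 1 (Ici (-c - m)) := by
    rw [Measure.map_apply (measurable_id'.add_const m) measurableSet_Ici]
    congr 1
    ext y
    simp only [mem_preimage, mem_Ici]
    constructor <;> intro <;> linarith
  have h3 : gaussianReal 0 1 (Ici (-c - m)) = gaussianReal 0 1 (Iic (m + c)) := by
    have hneg : (gaussianReal 0 1).map (fun y : ℝ => (-1) * y) = gaussianReal 0 1 := by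
      rw [gaussianReal_map_const_mul]
      norm_num
    conv_lhs => rw [← hneg]
    rw [Measure.map_apply (measurable_id'.const_mul _) measurableSet_Ici]
    congr 1
    ext y
    simp only [mem_preimage, mem_Ici, mem_Iic]
    constructor <;> intro <;> linarith
  rw [h1, h2, h3, stdNormalCDF, ENNReal.ofReal_toReal (measure_ne_top _ _)]

/-- **Gaussian p-values with nonpositive mean are uniformly conservative.**
If `Z ∼ N(m, 1)` with `m ≤ 0` and `P = Φ(−Z)` is the one-sided p-value, then
`ℙ(P ≤ x·τ) ≤ x · ℙ(P ≤ τ)` for all `x, τ ∈ [0,1]`. -/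
theorem gaussian_pvalue_uniformly_conservative
    {Ω : Type*} [MeasurableSpace Ω] (μ : Measure Ω) [IsProbabilityMeasure μ]
    (m : ℝ) (hm : m ≤ 0)
    (Z : Ω → ℝ) (hZmeas : Measurable Z)
    (hZlaw : Measure.map Z μ = ProbabilityTheory.gaussianReal m 1)
    (P : Ω → ℝ) (hP : ∀ ω, P ω = stdNormalCDF (-(Z ω))) :
    ∀ x ∈ Set.Icc (0 : ℝ) 1, ∀ τ ∈ Set.Icc (0 : ℝ) 1,
      μ {ω | P ω ≤ x * τ} ≤ ENNReal.ofReal x * μ {ω | P ω ≤ τ} := by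
  -- general event computation
  have hevent : ∀ c : ℝ,
      μ {ω | P ω ≤ stdNormalCDF c} = ENNReal.ofReal (stdNormalCDF (m + c)) := by
    intro c
    have hset : {ω | P ω ≤ stdNormalCDF c} = Z ⁻¹' (Ici (-c)) := by
      ext ω
      simp only [mem_setOf_eq, mem_preimage, mem_Ici, hP ω]
      rw [stdNormalCDF_strictMono.le_iff_le]
      constructor <;> intro <;> linarith
    rw [hset, ← Measure.map_apply hZmeas measurableSet_Ici, hZlaw, gaussianReal_Ici]
  intro x hx τ hτ
  obtain ⟨hx0, hx1⟩ := hx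
  obtain ⟨hτ0, hτ1⟩ := hτ
  -- case x * τ = 0
  rcases eq_or_lt_of_le (mul_nonneg hx0 hτ0) with hxτ | hxτ
  · have hempty : {ω | P ω ≤ x * τ} = ∅ := by
      ext ω
      simp only [mem_setOf_eq, mem_empty_iff_false, iff_false, not_le, ← hxτ, hP ω]
      exact stdNormalCDF_pos _
    rw [hempty]
    simp
  have hx0' : 0 < x := lt_of_lt_of_le (by nlinarith) (by nlinarith : x * τ ≤ x)
  have hτ0' : 0 < τ := by nlinarith
  rcases eq_or_lt_of_le hτ1 with hτ1' | hτ1'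
  · -- τ = 1
    subst hτ1'
    have huniv : {ω | P ω ≤ (1:ℝ)} = univ := by
      ext ω
      simp only [mem_setOf_eq, mem_univ, iff_true, hP ω]
      exact stdNormalCDF_le_one _
    rw [mul_one, huniv, measure_univ, mul_one]
    rcases eq_or_lt_of_le hx1 with hx1' | hx1'
    · subst hx1'
      simpa using prob_le_one
    · obtain ⟨c, hc⟩ := stdNormalCDF_surj hx0' hx1'
      rw [← hc, hevent c]
      refine ENNReal.ofReal_le_ofReal ?_
      exact stdNormalCDF_mono (by linarith)
  · -- τ < 1, so x * τ < 1
    have hxτ1 : x * τ < 1 := lt_of_le_of_lt (by nlinarith) hτ1'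
    obtain ⟨a, ha⟩ := stdNormalCDF_surj hxτ hxτ1
    obtain ⟨b, hb⟩ := stdNormalCDF_surj hτ0' hτ1'
    have hab : a ≤ b := by
      rw [← stdNormalCDF_strictMono.le_iff_le, ha, hb]
      nlinarith
    rw [← ha, ← hb, hevent a, hevent b, ← ENNReal.ofReal_mul hx0]
    refine ENNReal.ofReal_le_ofReal ?_
    have hkey := key_ineq hm hab
    have h1 := stdNormalCDF_pos b
    have h2 : stdNormalCDF a = x * stdNormalCDF b := by rw [ha, hb]
    refine le_of_mul_le_mul_right ?_ h1
    rw [h2] at hkey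
    exact hkey.trans_eq (by ring)
end

section
/- Let (P_i)_{i≥1} be [0,1]-valued p-values on a probability space and H0 ⊆ ℕ the index set of true nulls. Assume each null p-value P_i (i ∈ H0) is uniformly conservative and is independent of the σ-algebra G_{i−1} = σ(P_1,…,P_{i−1}). Fix α ∈ (0,1) and for each i let α_i, τ_i : Ω → (0,1) be G_{i−1}-measurable with α_i < τ_i almost surely, and assume that almost surely Σ_{i : P_i ≤ τ_i} α_i/τ_i ≤ α. Then the expected number of false discoveries satisfies E[ #{ i ∈ H0 : P_i ≤ α_i } ] ≤ α; in particular ℙ(∃ i ∈ H0 with P_i ≤ α_i) ≤ α. -/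
open MeasureTheory ProbabilityTheory
open scoped ENNReal

theorem key_lemma
    {Ω : Type*} [MeasurableSpace Ω] (μ : Measure Ω) [IsProbabilityMeasure μ]
    (p : Ω → ℝ) (hp : Measurable p)
    (A T : Ω → ℝ) (hA : Measurable A) (hT : Measurable T)
    (hrange : ∀ ω, 0 < A ω ∧ A ω ≤ T ω ∧ T ω ≤ 1)
    (hcons : ∀ x ∈ Set.Icc (0:ℝ) 1, ∀ τ ∈ Set.Icc (0:ℝ) 1,
      μ {ω | p ω ≤ x * τ} ≤ ENNReal.ofReal x * μ {ω | p ω ≤ τ})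
    (hind : IndepFun p (fun ω => (A ω, T ω)) μ) :
    μ {ω | p ω ≤ A ω}
      ≤ ∫⁻ ω, ENNReal.ofReal (A ω / T ω)
          * Set.indicator {ω' | p ω' ≤ T ω'} (fun _ => (1:ℝ≥0∞)) ω ∂μ := by
  set g : Ω → ℝ × ℝ := fun ω => (A ω, T ω) with hg
  have hgm : Measurable g := hA.prodMk hT
  set ν : Measure ℝ := μ.map p with hν
  set l : Measure (ℝ × ℝ) := μ.map g with hl
  have hprodlaw : μ.map (fun ω => (p ω, g ω)) = ν.prod l :=
    (indepFun_iff_map_prod_eq_prod_map_map hp.aemeasurable hgm.aemeasurable).1 hind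
  have hprob : IsProbabilityMeasure ν := Measure.isProbabilityMeasure_map hp.aemeasurable
  have hprobl : IsProbabilityMeasure l := Measure.isProbabilityMeasure_map hgm.aemeasurable
  -- F: indicator of {z.1 ≤ z.2.1}
  set F : ℝ × (ℝ × ℝ) → ℝ≥0∞ :=
    fun z => Set.indicator {w : ℝ × (ℝ × ℝ) | w.1 ≤ w.2.1} (fun _ => 1) z with hF
  have hFmeas : Measurable F := by
    apply (measurable_const : Measurable (fun _ : ℝ × (ℝ × ℝ) => (1:ℝ≥0∞))).indicator
    exact measurableSet_le measurable_fst (measurable_fst.comp measurable_snd)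
  set G : ℝ × (ℝ × ℝ) → ℝ≥0∞ :=
    fun z => ENNReal.ofReal (z.2.1 / z.2.2)
      * Set.indicator {w : ℝ × (ℝ × ℝ) | w.1 ≤ w.2.2} (fun _ => 1) z with hG
  have hGmeas : Measurable G := by
    apply Measurable.mul
    · exact ENNReal.measurable_ofReal.comp
        ((measurable_fst.comp measurable_snd).div (measurable_snd.comp measurable_snd))
    · exact (measurable_const : Measurable (fun _ : ℝ × (ℝ × ℝ) => (1:ℝ≥0∞))).indicator
        (measurableSet_le measurable_fst (measurable_snd.comp measurable_snd))
  have hLHS : μ {ω | p ω ≤ A ω} = ∫⁻ z, F z ∂(ν.prod l) := by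
    rw [← hprodlaw, lintegral_map hFmeas (hp.prodMk hgm)]
    have : ∀ ω, F (p ω, g ω)
        = Set.indicator {ω' | p ω' ≤ A ω'} (fun _ => (1:ℝ≥0∞)) ω := by
      intro ω
      simp only [hF, hg, Set.indicator_apply, Set.mem_setOf_eq]
    simp_rw [this]
    rw [lintegral_indicator (measurableSet_le hp hA)]
    simp
  have hRHS : (∫⁻ ω, ENNReal.ofReal (A ω / T ω)
          * Set.indicator {ω' | p ω' ≤ T ω'} (fun _ => (1:ℝ≥0∞)) ω ∂μ)
      = ∫⁻ z, G z ∂(ν.prod l) := by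
    rw [← hprodlaw, lintegral_map hGmeas (hp.prodMk hgm)]
    rfl
  rw [hLHS, hRHS]
  rw [lintegral_prod_symm F hFmeas.aemeasurable, lintegral_prod_symm G hGmeas.aemeasurable]
  -- now bound the inner integrals for l-a.e. y
  apply lintegral_mono_ae
  have hS : ∀ᵐ y ∂l, 0 < y.1 ∧ y.1 ≤ y.2 ∧ y.2 ≤ 1 := by
    rw [hl]
    rw [ae_map_iff hgm.aemeasurable]
    · exact ae_of_all _ fun ω => hrange ω
    · exact MeasurableSet.inter
        (measurableSet_lt measurable_const measurable_fst)
        (MeasurableSet.inter (measurableSet_le measurable_fst measurable_snd)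
          (measurableSet_le measurable_snd measurable_const))
  filter_upwards [hS] with y hy
  obtain ⟨hy1, hy12, hy21⟩ := hy
  have ht0 : 0 < y.2 := lt_of_lt_of_le hy1 hy12
  have hIic : ∀ c : ℝ, (∫⁻ x, F (x, y) ∂ν) = ν (Set.Iic y.1) := by
    intro c
    have : ∀ x : ℝ, F (x, y) = Set.indicator (Set.Iic y.1) (fun _ => (1:ℝ≥0∞)) x := by
      intro x
      simp only [hF, Set.indicator_apply, Set.mem_setOf_eq, Set.mem_Iic]
    simp_rw [this]
    rw [lintegral_indicator measurableSet_Iic]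
    simp
  rw [hIic 0]
  have hGint : (∫⁻ x, G (x, y) ∂ν) = ENNReal.ofReal (y.1 / y.2) * ν (Set.Iic y.2) := by
    have : ∀ x : ℝ, G (x, y) = ENNReal.ofReal (y.1 / y.2)
        * Set.indicator (Set.Iic y.2) (fun _ => (1:ℝ≥0∞)) x := by
      intro x
      simp only [hG, Set.indicator_apply, Set.mem_setOf_eq, Set.mem_Iic]
    simp_rw [this]
    rw [lintegral_const_mul _ ((measurable_const).indicator measurableSet_Iic)]
    rw [lintegral_indicator measurableSet_Iic]
    simp
  rw [hGint]
  have hIic_eq : ∀ c : ℝ, ν (Set.Iic c) = μ {ω | p ω ≤ c} := by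
    intro c
    rw [hν, Measure.map_apply hp measurableSet_Iic]
    rfl
  rw [hIic_eq, hIic_eq]
  have hxmem : y.1 / y.2 ∈ Set.Icc (0:ℝ) 1 := by
    constructor
    · exact div_nonneg hy1.le ht0.le
    · rw [div_le_one ht0]; exact hy12
  have hτmem : y.2 ∈ Set.Icc (0:ℝ) 1 := ⟨ht0.le, hy21⟩
  have := hcons _ hxmem _ hτmem
  have heq : y.1 / y.2 * y.2 = y.1 := div_mul_cancel₀ _ ht0.ne'
  rwa [heq] at this

/-- The σ-algebra generated by the first `i` p-values `P 0, …, P (i-1)`. -/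
def pastFiltration {Ω : Type*} [MeasurableSpace Ω] (P : ℕ → Ω → ℝ) (i : ℕ) :
    MeasurableSpace Ω :=
  ⨆ j ∈ Finset.range i, MeasurableSpace.comap (P j) inferInstance

/-- **Discard-Spending controls PFER (and hence FWER).** If each null p-value is uniformly
conservative and independent of the past, the levels `α_i, τ_i` are predictable, `(0,1)`-valued
with `α_i < τ_i` a.s., and a.s. `∑_{i : P_i ≤ τ_i} α_i/τ_i ≤ α`, then the expected number of
false discoveries is at most `α`; in particular the FWER is at most `α`. -/
theorem discard_spending_pfer_control
    {Ω : Type*} [MeasurableSpace Ω] (μ : Measure Ω) [IsProbabilityMeasure μ]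
    (P : ℕ → Ω → ℝ) (hPmeas : ∀ i, Measurable (P i))
    (hPrange : ∀ i ω, P i ω ∈ Set.Icc (0 : ℝ) 1)
    (H0 : Set ℕ)
    (hconserv : ∀ i ∈ H0, ∀ x ∈ Set.Icc (0 : ℝ) 1, ∀ τ ∈ Set.Icc (0 : ℝ) 1,
      μ {ω | P i ω ≤ x * τ} ≤ ENNReal.ofReal x * μ {ω | P i ω ≤ τ})
    (hindep : ∀ i ∈ H0,
      Indep (MeasurableSpace.comap (P i) inferInstance) (pastFiltration P i) μ)
    (α : ℝ) (hα : α ∈ Set.Ioo (0 : ℝ) 1)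
    (alev τlev : ℕ → Ω → ℝ)
    (halev_meas : ∀ i, Measurable[pastFiltration P i] (alev i))
    (hτlev_meas : ∀ i, Measurable[pastFiltration P i] (τlev i))
    (halev_range : ∀ i ω, alev i ω ∈ Set.Ioo (0 : ℝ) 1)
    (hτlev_range : ∀ i ω, τlev i ω ∈ Set.Ioo (0 : ℝ) 1)
    (h_lt : ∀ i, ∀ᵐ ω ∂μ, alev i ω < τlev i ω)
    (hbudget : ∀ᵐ ω ∂μ,
      ∑' i, ENNReal.ofReal (if P i ω ≤ τlev i ω then alev i ω / τlev i ω else 0)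
        ≤ ENNReal.ofReal α) :
    (∫⁻ ω, ∑' i : H0, Set.indicator {ω' | P i ω' ≤ alev i ω'} (fun _ => (1 : ℝ≥0∞)) ω ∂μ)
        ≤ ENNReal.ofReal α ∧
      μ {ω | ∃ i ∈ H0, P i ω ≤ alev i ω} ≤ ENNReal.ofReal α := by
  have hpast_le : ∀ i, pastFiltration P i ≤ ‹MeasurableSpace Ω› := by
    intro i
    apply iSup_le; intro j; apply iSup_le; intro _
    exact (hPmeas j).comap_le
  have hAm : ∀ i, Measurable (alev i) := fun i => (halev_meas i).mono (hpast_le i) le_rfl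
  have hTm : ∀ i, Measurable (τlev i) := fun i => (hτlev_meas i).mono (hpast_le i) le_rfl
  -- truncated level
  set A' : ℕ → Ω → ℝ := fun i ω => min (alev i ω) (τlev i ω) with hA'
  have hA'm : ∀ i, Measurable (A' i) := fun i => (hAm i).min (hTm i)
  have hsetmeas : ∀ i, MeasurableSet {ω | P i ω ≤ alev i ω} :=
    fun i => measurableSet_le (hPmeas i) (hAm i)
  -- the per-hypothesis bound
  have hterm : ∀ i ∈ H0, μ {ω | P i ω ≤ alev i ω}
      ≤ ∫⁻ ω, ENNReal.ofReal
          (if P i ω ≤ τlev i ω then alev i ω / τlev i ω else 0) ∂μ := by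
    intro i hi
    have h1 : μ {ω | P i ω ≤ alev i ω} = μ {ω | P i ω ≤ A' i ω} := by
      apply measure_congr
      rw [Filter.eventuallyEq_set]
      filter_upwards [h_lt i] with ω hω
      simp [hA', min_eq_left hω.le]
    have hind : IndepFun (P i) (fun ω => (A' i ω, τlev i ω)) μ := by
      have hle : MeasurableSpace.comap (fun ω => (A' i ω, τlev i ω)) inferInstance
          ≤ pastFiltration P i := by
        apply Measurable.comap_le
        exact Measurable.prodMk
          (Measurable.min (halev_meas i) (hτlev_meas i)) (hτlev_meas i)
      exact indep_of_indep_of_le_right (hindep i hi) hle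
    have h2 := key_lemma μ (P i) (hPmeas i) (A' i) (τlev i) (hA'm i) (hTm i)
      (fun ω => ⟨lt_min (halev_range i ω).1 (hτlev_range i ω).1,
        min_le_right _ _, (hτlev_range i ω).2.le⟩)
      (hconserv i hi) hind
    have h3 : (∫⁻ ω, ENNReal.ofReal (A' i ω / τlev i ω)
          * Set.indicator {ω' | P i ω' ≤ τlev i ω'} (fun _ => (1:ℝ≥0∞)) ω ∂μ)
        = ∫⁻ ω, ENNReal.ofReal
          (if P i ω ≤ τlev i ω then alev i ω / τlev i ω else 0) ∂μ := by
      apply lintegral_congr_ae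
      filter_upwards [h_lt i] with ω hω
      by_cases h : P i ω ≤ τlev i ω
      · simp [Set.indicator_of_mem (show ω ∈ {ω' | P i ω' ≤ τlev i ω'} from h), h,
          hA', min_eq_left hω.le]
      · simp [Set.indicator_of_notMem (show ω ∉ {ω' | P i ω' ≤ τlev i ω'} from h), h]
    rw [h1, ← h3]
    exact h2
  -- measurability of the budget summands
  have hbm : ∀ i, Measurable (fun ω => ENNReal.ofReal
      (if P i ω ≤ τlev i ω then alev i ω / τlev i ω else 0)) := by
    intro i
    apply ENNReal.measurable_ofReal.comp
    exact Measurable.ite (measurableSet_le (hPmeas i) (hTm i))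
      ((hAm i).div (hTm i)) measurable_const
  -- PFER bound
  have hPFER : (∫⁻ ω, ∑' i : H0,
      Set.indicator {ω' | P i ω' ≤ alev i ω'} (fun _ => (1 : ℝ≥0∞)) ω ∂μ)
      ≤ ENNReal.ofReal α := by
    rw [lintegral_tsum (fun i : H0 =>
      ((measurable_const.indicator (hsetmeas i)).aemeasurable))]
    have step1 : ∀ i : H0, (∫⁻ ω,
        Set.indicator {ω' | P (i:ℕ) ω' ≤ alev (i:ℕ) ω'} (fun _ => (1 : ℝ≥0∞)) ω ∂μ)
        = μ {ω | P (i:ℕ) ω ≤ alev (i:ℕ) ω} := fun i =>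
      lintegral_indicator_one (hsetmeas i)
    calc ∑' i : H0, (∫⁻ ω,
        Set.indicator {ω' | P (i:ℕ) ω' ≤ alev (i:ℕ) ω'} (fun _ => (1 : ℝ≥0∞)) ω ∂μ)
        ≤ ∑' i : H0, ∫⁻ ω, ENNReal.ofReal
            (if P (i:ℕ) ω ≤ τlev (i:ℕ) ω then alev (i:ℕ) ω / τlev (i:ℕ) ω else 0) ∂μ := by
          apply ENNReal.tsum_le_tsum
          intro i
          rw [step1 i]
          exact hterm i i.2
      _ ≤ ∑' i : ℕ, ∫⁻ ω, ENNReal.ofReal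
            (if P i ω ≤ τlev i ω then alev i ω / τlev i ω else 0) ∂μ := by
          exact (tsum_subtype H0 (fun n => ∫⁻ ω, ENNReal.ofReal
            (if P n ω ≤ τlev n ω then alev n ω / τlev n ω else 0) ∂μ)).trans_le
            (ENNReal.tsum_le_tsum fun i => Set.indicator_le_self _ _ i)
      _ = ∫⁻ ω, ∑' i : ℕ, ENNReal.ofReal
            (if P i ω ≤ τlev i ω then alev i ω / τlev i ω else 0) ∂μ :=
          (lintegral_tsum (fun i => (hbm i).aemeasurable)).symm
      _ ≤ ∫⁻ _, ENNReal.ofReal α ∂μ := lintegral_mono_ae hbudget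
      _ = ENNReal.ofReal α := by simp
  refine ⟨hPFER, le_trans ?_ hPFER⟩
  -- FWER ≤ PFER
  have hsm : MeasurableSet {ω | ∃ i ∈ H0, P i ω ≤ alev i ω} := by
    have : {ω | ∃ i ∈ H0, P i ω ≤ alev i ω}
        = ⋃ i ∈ H0, {ω | P i ω ≤ alev i ω} := by
      ext ω; simp
    rw [this]
    exact MeasurableSet.biUnion (Set.to_countable _) fun i _ => hsetmeas i
  rw [← lintegral_indicator_one hsm]
  apply lintegral_mono
  intro ω
  by_cases h : ω ∈ {ω | ∃ i ∈ H0, P i ω ≤ alev i ω}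
  · rw [Set.indicator_of_mem h]
    obtain ⟨i, hi, hpi⟩ := h
    calc (1 : ℝ≥0∞) = Set.indicator {ω' | P i ω' ≤ alev i ω'} (fun _ => (1:ℝ≥0∞)) ω :=
          (Set.indicator_of_mem (show ω ∈ {ω' | P i ω' ≤ alev i ω'} from hpi) (fun _ => (1:ℝ≥0∞))).symm
      _ ≤ _ := ENNReal.le_tsum (⟨i, hi⟩ : H0)
  · rw [Set.indicator_of_notMem h]
    exact zero_le
end

section
/- Let (P_i)_{i≥1} be [0,1]-valued p-values on a probability space and H0 ⊆ ℕ the index set of true nulls. Assume each null p-value P_i (i ∈ H0) is valid and is independent of the σ-algebra G_{i−1} = σ(P_1,…,P_{i−1}). Fix α ∈ (0,1) and for each i let α_i, λ_i : Ω → (0,1) be G_{i−1}-measurable, and assume that almost surely Σ_{i : P_i > λ_i} α_i/(1−λ_i) ≤ α. Then the expected number of false discoveries satisfies E[ #{ i ∈ H0 : P_i ≤ α_i } ] ≤ α; in particular ℙ(∃ i ∈ H0 with P_i ≤ α_i) ≤ α. -/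
open MeasureTheory ProbabilityTheory
open scoped ENNReal


lemma key_aux {Ω : Type*} [MeasurableSpace Ω] (μ : Measure Ω) [IsProbabilityMeasure μ]
    (X : Ω → ℝ) (hX : Measurable X)
    (a l : Ω → ℝ) (ha : Measurable a) (hl : Measurable l)
    (ha_range : ∀ ω, a ω ∈ Set.Ioo (0:ℝ) 1) (hl_range : ∀ ω, l ω ∈ Set.Ioo (0:ℝ) 1)
    (hvalid : ∀ x ∈ Set.Icc (0:ℝ) 1, μ {ω | X ω ≤ x} ≤ ENNReal.ofReal x)
    (hindep : IndepFun (fun ω => (a ω, l ω)) X μ) :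
    μ {ω | X ω ≤ a ω} ≤
      ∫⁻ ω, ENNReal.ofReal (if l ω < X ω then a ω / (1 - l ω) else 0) ∂μ := by
  set Y : Ω → ℝ × ℝ := fun ω => (a ω, l ω) with hYdef
  have hY : Measurable Y := ha.prodMk hl
  have hmap : μ.map (fun ω => (Y ω, X ω)) = (μ.map Y).prod (μ.map X) :=
    (indepFun_iff_map_prod_eq_prod_map_map hY.aemeasurable hX.aemeasurable).1 hindep
  set ν := μ.map X with hνdef
  set ρ := μ.map Y with hρdef
  haveI : IsProbabilityMeasure ν := Measure.isProbabilityMeasure_map hX.aemeasurable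
  haveI : IsProbabilityMeasure ρ := Measure.isProbabilityMeasure_map hY.aemeasurable
  -- the measurable function on the product
  set g : (ℝ × ℝ) × ℝ → ℝ≥0∞ :=
    fun p => ENNReal.ofReal (if p.1.2 < p.2 then p.1.1 / (1 - p.1.2) else 0) with hgdef
  have hg : Measurable g := by
    apply Measurable.ennreal_ofReal
    exact Measurable.ite (measurableSet_lt (measurable_fst.snd) measurable_snd)
      (measurable_fst.fst.div (measurable_const.sub measurable_fst.snd)) measurable_const
  have hT : MeasurableSet {p : (ℝ × ℝ) × ℝ | p.2 ≤ p.1.1} :=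
    measurableSet_le measurable_snd measurable_fst.fst
  -- rewrite LHS
  have hLHS : μ {ω | X ω ≤ a ω} = ∫⁻ y, ν {x | x ≤ y.1} ∂ρ := by
    have h1 : μ {ω | X ω ≤ a ω}
        = μ.map (fun ω => (Y ω, X ω)) {p : (ℝ × ℝ) × ℝ | p.2 ≤ p.1.1} := by
      rw [Measure.map_apply (hY.prodMk hX) hT]
      rfl
    rw [h1, hmap, Measure.prod_apply hT]
    rfl
  -- rewrite RHS
  have hRHS : (∫⁻ ω, ENNReal.ofReal (if l ω < X ω then a ω / (1 - l ω) else 0) ∂μ)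
      = ∫⁻ y, ∫⁻ x, g (y, x) ∂ν ∂ρ := by
    have h1 : (∫⁻ ω, ENNReal.ofReal (if l ω < X ω then a ω / (1 - l ω) else 0) ∂μ)
        = ∫⁻ ω, g (Y ω, X ω) ∂μ := rfl
    rw [h1, ← lintegral_map hg (hY.prodMk hX), hmap, MeasureTheory.lintegral_prod _ hg.aemeasurable]
  rw [hLHS, hRHS]
  -- a.e. support of ρ
  have hae : ∀ᵐ y ∂ρ, y ∈ Set.Ioo (0:ℝ) 1 ×ˢ Set.Ioo (0:ℝ) 1 := by
    refine (ae_map_iff hY.aemeasurable (measurableSet_Ioo.prod measurableSet_Ioo)).2 ?_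
    exact ae_of_all _ fun ω => ⟨ha_range ω, hl_range ω⟩
  -- validity transported to ν
  have hν_valid : ∀ x ∈ Set.Icc (0:ℝ) 1, ν {t | t ≤ x} ≤ ENNReal.ofReal x := by
    intro x hx
    have : ν {t | t ≤ x} = μ {ω | X ω ≤ x} := by
      rw [hνdef]; exact Measure.map_apply hX measurableSet_Iic
    rw [this]; exact hvalid x hx
  refine lintegral_mono_ae ?_
  filter_upwards [hae] with y hy
  obtain ⟨hy1, hy2⟩ := hy
  set A := y.1 with hA
  set L := y.2 with hL
  have hL1 : (0:ℝ) < 1 - L := by linarith [hy2.2]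
  -- compute inner integral
  have hinner : (∫⁻ x, g (y, x) ∂ν)
      = ENNReal.ofReal (A / (1 - L)) * ν (Set.Ioi L) := by
    have : (fun x => g (y, x))
        = (Set.Ioi L).indicator (fun _ => ENNReal.ofReal (A / (1 - L))) := by
      funext x
      by_cases h : L < x
      · simp [hgdef, hA, hL, (show y.2 < x from h), Set.indicator_of_mem (Set.mem_Ioi.2 h)]
      · simp [hgdef, hA, hL, (show ¬ y.2 < x from h), Set.indicator_of_notMem (fun hx => h (Set.mem_Ioi.1 hx))]
    rw [this, lintegral_indicator_const measurableSet_Ioi]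
  rw [hinner]
  have hIic : ν (Set.Iic L) ≤ ENNReal.ofReal L := hν_valid L ⟨le_of_lt hy2.1, le_of_lt hy2.2⟩
  have hIoi : ENNReal.ofReal (1 - L) ≤ ν (Set.Ioi L) := by
    have hc : ν (Set.Ioi L) = 1 - ν (Set.Iic L) := by
      rw [← Set.compl_Iic, measure_compl measurableSet_Iic (measure_ne_top ν _), measure_univ]
    rw [hc]
    have h1 : ENNReal.ofReal (1 - L) = 1 - ENNReal.ofReal L := by
      rw [ENNReal.ofReal_sub _ (le_of_lt hy2.1), ENNReal.ofReal_one]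
    rw [h1]
    exact tsub_le_tsub le_rfl hIic
  calc ν {x | x ≤ A} ≤ ENNReal.ofReal A := hν_valid A ⟨le_of_lt hy1.1, le_of_lt hy1.2⟩
    _ = ENNReal.ofReal (A / (1 - L) * (1 - L)) := by rw [div_mul_cancel₀ _ (ne_of_gt hL1)]
    _ = ENNReal.ofReal (A / (1 - L)) * ENNReal.ofReal (1 - L) := by
        rw [ENNReal.ofReal_mul (div_nonneg (le_of_lt hy1.1) (le_of_lt hL1))]
    _ ≤ ENNReal.ofReal (A / (1 - L)) * ν (Set.Ioi L) := by
        exact mul_le_mul_right hIoi _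


/-- **Adaptive-Spending controls PFER (and hence FWER).** If each null p-value is valid and
independent of the past, the levels `α_i, λ_i` are predictable and `(0,1)`-valued, and a.s.
`∑_{i : P_i > λ_i} α_i/(1-λ_i) ≤ α`, then the expected number of false discoveries is at most
`α`; in particular the FWER is at most `α`. -/
theorem adaptive_spending_pfer_control
    {Ω : Type*} [MeasurableSpace Ω] (μ : Measure Ω) [IsProbabilityMeasure μ]
    (P : ℕ → Ω → ℝ) (hPmeas : ∀ i, Measurable (P i))
    (hPrange : ∀ i ω, P i ω ∈ Set.Icc (0 : ℝ) 1)
    (H0 : Set ℕ)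
    (hvalid : ∀ i ∈ H0, ∀ x ∈ Set.Icc (0 : ℝ) 1,
      μ {ω | P i ω ≤ x} ≤ ENNReal.ofReal x)
    (hindep : ∀ i ∈ H0,
      Indep (MeasurableSpace.comap (P i) inferInstance) (pastFiltration P i) μ)
    (α : ℝ) (hα : α ∈ Set.Ioo (0 : ℝ) 1)
    (alev lamlev : ℕ → Ω → ℝ)
    (halev_meas : ∀ i, Measurable[pastFiltration P i] (alev i))
    (hlamlev_meas : ∀ i, Measurable[pastFiltration P i] (lamlev i))
    (halev_range : ∀ i ω, alev i ω ∈ Set.Ioo (0 : ℝ) 1)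
    (hlamlev_range : ∀ i ω, lamlev i ω ∈ Set.Ioo (0 : ℝ) 1)
    (hbudget : ∀ᵐ ω ∂μ,
      ∑' i, ENNReal.ofReal (if lamlev i ω < P i ω then alev i ω / (1 - lamlev i ω) else 0)
        ≤ ENNReal.ofReal α) :
    (∫⁻ ω, ∑' i : H0, Set.indicator {ω' | P i ω' ≤ alev i ω'} (fun _ => (1 : ℝ≥0∞)) ω ∂μ)
        ≤ ENNReal.ofReal α ∧
      μ {ω | ∃ i ∈ H0, P i ω ≤ alev i ω} ≤ ENNReal.ofReal α := by
  have hpast_le : ∀ i, pastFiltration P i ≤ ‹MeasurableSpace Ω› := fun i => by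
    apply iSup₂_le
    intro j _
    exact (hPmeas j).comap_le
  have halev' : ∀ i, Measurable (alev i) := fun i => (halev_meas i).mono (hpast_le i) le_rfl
  have hlamlev' : ∀ i, Measurable (lamlev i) := fun i => (hlamlev_meas i).mono (hpast_le i) le_rfl
  set S : ℕ → Set Ω := fun i => {ω | P i ω ≤ alev i ω} with hSdef
  have hSmeas : ∀ i, MeasurableSet (S i) := fun i => measurableSet_le (hPmeas i) (halev' i)
  set B : ℕ → ℝ≥0∞ := fun i =>
    ∫⁻ ω, ENNReal.ofReal (if lamlev i ω < P i ω then alev i ω / (1 - lamlev i ω) else 0) ∂μ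
    with hBdef
  have hBmeas : ∀ i, Measurable (fun ω =>
      ENNReal.ofReal (if lamlev i ω < P i ω then alev i ω / (1 - lamlev i ω) else 0)) := by
    intro i
    apply Measurable.ennreal_ofReal
    exact Measurable.ite (measurableSet_lt (hlamlev' i) (hPmeas i))
      ((halev' i).div (measurable_const.sub (hlamlev' i))) measurable_const
  have key : ∀ i ∈ H0, μ (S i) ≤ B i := by
    intro i hi
    have hYmeas : Measurable[pastFiltration P i] (fun ω => (alev i ω, lamlev i ω)) :=
      Measurable.prodMk (halev_meas i) (hlamlev_meas i)
    have hYle : MeasurableSpace.comap (fun ω => (alev i ω, lamlev i ω)) inferInstance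
        ≤ pastFiltration P i := Measurable.comap_le hYmeas
    have hindep' : IndepFun (fun ω => (alev i ω, lamlev i ω)) (P i) μ :=
      (indep_of_indep_of_le_right (hindep i hi) hYle).symm
    exact key_aux μ (P i) (hPmeas i) (alev i) (lamlev i) (halev' i) (hlamlev' i)
      (halev_range i) (hlamlev_range i) (hvalid i hi) hindep'
  have hsumB : ∑' i, B i ≤ ENNReal.ofReal α := by
    rw [hBdef, ← lintegral_tsum (fun i => (hBmeas i).aemeasurable)]
    calc (∫⁻ ω, ∑' i, ENNReal.ofReal
            (if lamlev i ω < P i ω then alev i ω / (1 - lamlev i ω) else 0) ∂μ)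
        ≤ ∫⁻ _, ENNReal.ofReal α ∂μ := lintegral_mono_ae hbudget
      _ = ENNReal.ofReal α := by simp
  have h1 : ∑' i : H0, μ (S i) ≤ ENNReal.ofReal α := by
    calc ∑' i : H0, μ (S i) ≤ ∑' i : H0, B i := ENNReal.tsum_le_tsum fun i => key i i.2
      _ = ∑' i, H0.indicator B i := tsum_subtype H0 B
      _ ≤ ∑' i, B i := ENNReal.tsum_le_tsum fun i => Set.indicator_le_self H0 B i
      _ ≤ ENNReal.ofReal α := hsumB
  constructor
  · have heq : (∫⁻ ω, ∑' i : H0, Set.indicator (S i) (fun _ => (1 : ℝ≥0∞)) ω ∂μ)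
        = ∑' i : H0, μ (S i) := by
      rw [lintegral_tsum (fun i : H0 =>
        ((measurable_const.indicator (hSmeas i)).aemeasurable))]
      congr 1
      funext i
      exact lintegral_indicator_one (hSmeas i)
    exact le_of_le_of_eq (le_of_eq heq) rfl |>.trans h1
  · have hset : {ω | ∃ i ∈ H0, P i ω ≤ alev i ω} = ⋃ i : H0, S i := by
      ext ω
      simp [hSdef]
    rw [hset]
    exact (measure_iUnion_le _).trans h1
end

section
/- Let (P_i)_{i≥1} be [0,1]-valued p-values on a probability space and H0 ⊆ ℕ the index set of true nulls. Assume each null p-value P_i (i ∈ H0) is uniformly conservative and is independent of the σ-algebra G_{i−1} = σ(P_1,…,P_{i−1}). Fix α ∈ (0,1) and for each i let α_i, λ_i, τ_i : Ω → (0,1) be G_{i−1}-measurable with λ_i < τ_i and α_i < τ_i almost surely, and assume that almost surely Σ_{i : λ_i < P_i ≤ τ_i} α_i/(τ_i−λ_i) ≤ α. Then the expected number of false discoveries satisfies E[ #{ i ∈ H0 : P_i ≤ α_i } ] ≤ α; in particular ℙ(∃ i ∈ H0 with P_i ≤ α_i) ≤ α. -/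
open MeasureTheory ProbabilityTheory
open scoped ENNReal

/-- Monotonicity of independence in the second σ-algebra. -/
lemma indep_mono_right' {Ω : Type*} {mΩ : MeasurableSpace Ω} {μ : Measure Ω}
    {m₁ m₂ m₂' : MeasurableSpace Ω} (h : Indep m₁ m₂ μ) (hle : m₂' ≤ m₂) :
    Indep m₁ m₂' μ :=
  fun t1 t2 ht1 ht2 => h t1 t2 ht1 (hle t2 ht2)

/-- Pointwise consequence of uniform conservativeness. -/
lemma pointwise_bound (F : ℝ → ℝ≥0∞) (hF1 : ∀ c, F c ≤ 1)
    (hF : ∀ x ∈ Set.Icc (0:ℝ) 1, ∀ τ ∈ Set.Icc (0:ℝ) 1,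
      F (x * τ) ≤ ENNReal.ofReal x * F τ)
    {a l τ : ℝ} (ha : a ∈ Set.Ioo (0:ℝ) 1) (hl : l ∈ Set.Ioo (0:ℝ) 1)
    (hτ : τ ∈ Set.Ioo (0:ℝ) 1) (hlτ : l < τ) (haτ : a < τ) :
    F a ≤ ENNReal.ofReal (a / (τ - l)) * (F τ - F l) := by
  have hτ0 : (0:ℝ) < τ := hτ.1
  have hτl0 : (0:ℝ) < τ - l := by linarith
  have hFτ_ne : F τ ≠ ∞ := (lt_of_le_of_lt (hF1 τ) (by norm_num)).ne
  have key1 : F a ≤ ENNReal.ofReal (a / τ) * F τ := by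
    have := hF (a / τ) ⟨div_nonneg ha.1.le hτ0.le, by rw [div_le_one hτ0]; linarith⟩ τ
      ⟨hτ0.le, hτ.2.le⟩
    rwa [div_mul_cancel₀ _ hτ0.ne'] at this
  have key2 : F l ≤ ENNReal.ofReal (l / τ) * F τ := by
    have := hF (l / τ) ⟨div_nonneg hl.1.le hτ0.le, by rw [div_le_one hτ0]; linarith⟩ τ
      ⟨hτ0.le, hτ.2.le⟩
    rwa [div_mul_cancel₀ _ hτ0.ne'] at this
  have hlτ1 : l / τ ≤ 1 := by rw [div_le_one hτ0]; linarith
  have hsub : ENNReal.ofReal ((τ - l) / τ) * F τ ≤ F τ - F l := by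
    have h1 : ENNReal.ofReal ((τ - l) / τ) = 1 - ENNReal.ofReal (l / τ) := by
      rw [← ENNReal.ofReal_one, ← ENNReal.ofReal_sub _ (div_nonneg hl.1.le hτ0.le)]
      congr 1
      field_simp
    rw [h1, ENNReal.sub_mul (fun _ _ => hFτ_ne), one_mul]
    exact tsub_le_tsub le_rfl key2
  calc F a ≤ ENNReal.ofReal (a / τ) * F τ := key1
    _ = ENNReal.ofReal (a / (τ - l)) * (ENNReal.ofReal ((τ - l) / τ) * F τ) := by
        rw [← mul_assoc, ← ENNReal.ofReal_mul (div_nonneg ha.1.le hτl0.le)]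
        congr 2
        field_simp
    _ ≤ ENNReal.ofReal (a / (τ - l)) * (F τ - F l) :=
        mul_le_mul_right hsub _

/-- The key single-index step: probability of rejection is bounded by the
expected budget spent on index `i`. -/
lemma key_step {Ω : Type*} [MeasurableSpace Ω] (μ : Measure Ω) [IsProbabilityMeasure μ]
    (p : Ω → ℝ) (hp : Measurable p)
    (a l τ : Ω → ℝ) (ha : Measurable a) (hl : Measurable l) (ht : Measurable τ)
    (hind : IndepFun p (fun ω => (a ω, l ω, τ ω)) μ)
    (hcons : ∀ x ∈ Set.Icc (0:ℝ) 1, ∀ t ∈ Set.Icc (0:ℝ) 1,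
      μ {ω | p ω ≤ x * t} ≤ ENNReal.ofReal x * μ {ω | p ω ≤ t})
    (ha_range : ∀ ω, a ω ∈ Set.Ioo (0:ℝ) 1) (hl_range : ∀ ω, l ω ∈ Set.Ioo (0:ℝ) 1)
    (ht_range : ∀ ω, τ ω ∈ Set.Ioo (0:ℝ) 1)
    (hlt : ∀ᵐ ω ∂μ, l ω < τ ω) (hat : ∀ᵐ ω ∂μ, a ω < τ ω) :
    μ {ω | p ω ≤ a ω} ≤
      ∫⁻ ω, ENNReal.ofReal
        (if l ω < p ω ∧ p ω ≤ τ ω then a ω / (τ ω - l ω) else 0) ∂μ := by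
  classical
  set g : Ω → ℝ × ℝ × ℝ := fun ω => (a ω, l ω, τ ω) with hg_def
  have hg : Measurable g := ha.prodMk (hl.prodMk ht)
  set ν : Measure ℝ := μ.map p with hν_def
  set κ : Measure (ℝ × ℝ × ℝ) := μ.map g with hκ_def
  haveI : IsProbabilityMeasure ν := Measure.isProbabilityMeasure_map hp.aemeasurable
  haveI : IsProbabilityMeasure κ := Measure.isProbabilityMeasure_map hg.aemeasurable
  have hmap : μ.map (fun ω => (p ω, g ω)) = ν.prod κ :=
    (indepFun_iff_map_prod_eq_prod_map_map hp.aemeasurable hg.aemeasurable).mp hind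
  -- F is the cdf of p
  set F : ℝ → ℝ≥0∞ := fun c => ν (Set.Iic c) with hF_def
  have hFc : ∀ c, F c = μ {ω | p ω ≤ c} := by
    intro c
    simp only [hF_def, hν_def]
    rw [Measure.map_apply hp measurableSet_Iic]
    rfl
  -- LHS as an integral over κ
  have hS : MeasurableSet {q : ℝ × (ℝ × ℝ × ℝ) | q.1 ≤ q.2.1} :=
    measurableSet_le measurable_fst (measurable_fst.comp measurable_snd)
  have hLHS : μ {ω | p ω ≤ a ω} = ∫⁻ y, F y.1 ∂κ := by
    have h1 : {ω | p ω ≤ a ω} =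
        (fun ω => (p ω, g ω)) ⁻¹' {q : ℝ × (ℝ × ℝ × ℝ) | q.1 ≤ q.2.1} := rfl
    rw [h1, ← Measure.map_apply (hp.prodMk hg) hS, hmap,
      Measure.prod_apply_symm hS]
    rfl
  -- RHS as an integral over κ
  set C : ℝ × ℝ × ℝ → ℝ≥0∞ := fun y => ENNReal.ofReal (y.1 / (y.2.2 - y.2.1)) with hC_def
  have hCmeas : Measurable C :=
    (measurable_fst.div ((measurable_snd.comp measurable_snd).sub
      (measurable_fst.comp measurable_snd))).ennreal_ofReal
  set h : ℝ × (ℝ × ℝ × ℝ) → ℝ≥0∞ := fun q =>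
    if q.2.2.1 < q.1 ∧ q.1 ≤ q.2.2.2 then C q.2 else 0 with hh_def
  have hhmeas : Measurable h := by
    apply Measurable.ite _ (hCmeas.comp measurable_snd) measurable_const
    exact ((measurableSet_lt ((measurable_fst.comp measurable_snd).comp measurable_snd)
        measurable_fst).inter
      (measurableSet_le measurable_fst
        ((measurable_snd.comp measurable_snd).comp measurable_snd)))
  have hRHS : ∫⁻ ω, ENNReal.ofReal
        (if l ω < p ω ∧ p ω ≤ τ ω then a ω / (τ ω - l ω) else 0) ∂μ
      = ∫⁻ y, C y * ν (Set.Ioc y.2.1 y.2.2) ∂κ := by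
    have h1 : ∀ ω, ENNReal.ofReal
        (if l ω < p ω ∧ p ω ≤ τ ω then a ω / (τ ω - l ω) else 0) = h (p ω, g ω) := by
      intro ω
      by_cases hc : l ω < p ω ∧ p ω ≤ τ ω <;> simp [hh_def, hC_def, hg_def, hc]
    simp_rw [h1]
    rw [← lintegral_map hhmeas (hp.prodMk hg), hmap, lintegral_prod_symm _ hhmeas.aemeasurable]
    congr 1
    ext y
    have h2 : ∀ t : ℝ, h (t, y) = Set.indicator (Set.Ioc y.2.1 y.2.2) (fun _ => C y) t := by
      intro t
      simp [hh_def, Set.indicator_apply, Set.mem_Ioc]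
    simp_rw [h2]
    rw [lintegral_indicator measurableSet_Ioc, setLIntegral_const]
  rw [hLHS, hRHS]
  -- a.e. comparison over κ
  apply lintegral_mono_ae
  have hQmeas : MeasurableSet {y : ℝ × ℝ × ℝ | y.1 ∈ Set.Ioo (0:ℝ) 1 ∧
      y.2.1 ∈ Set.Ioo (0:ℝ) 1 ∧ y.2.2 ∈ Set.Ioo (0:ℝ) 1 ∧ y.2.1 < y.2.2 ∧ y.1 < y.2.2} := by
    apply MeasurableSet.inter (measurable_fst measurableSet_Ioo)
    apply MeasurableSet.inter ((measurable_fst.comp measurable_snd) measurableSet_Ioo)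
    apply MeasurableSet.inter ((measurable_snd.comp measurable_snd) measurableSet_Ioo)
    exact MeasurableSet.inter
      (measurableSet_lt (measurable_fst.comp measurable_snd)
        (measurable_snd.comp measurable_snd))
      (measurableSet_lt measurable_fst (measurable_snd.comp measurable_snd))
  have hQ : ∀ᵐ y ∂κ, y.1 ∈ Set.Ioo (0:ℝ) 1 ∧ y.2.1 ∈ Set.Ioo (0:ℝ) 1 ∧
      y.2.2 ∈ Set.Ioo (0:ℝ) 1 ∧ y.2.1 < y.2.2 ∧ y.1 < y.2.2 := by
    rw [hκ_def, ae_map_iff hg.aemeasurable hQmeas]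
    filter_upwards [hlt, hat] with ω h1 h2
    exact ⟨ha_range ω, hl_range ω, ht_range ω, h1, h2⟩
  filter_upwards [hQ] with y hy
  obtain ⟨hy1, hy2, hy3, hy4, hy5⟩ := hy
  have hbound : F y.1 ≤ ENNReal.ofReal (y.1 / (y.2.2 - y.2.1)) * (F y.2.2 - F y.2.1) := by
    apply pointwise_bound F (fun c => prob_le_one)
    · intro x hx t htI
      rw [hFc, hFc]
      exact hcons x hx t htI
    · exact hy1
    · exact hy2
    · exact hy3
    · exact hy4
    · exact hy5
  refine hbound.trans ?_
  rw [hC_def]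
  apply mul_le_mul_right
  -- F τ - F l ≤ ν (Ioc l τ)
  have hcover : Set.Iic y.2.2 ⊆ Set.Ioc y.2.1 y.2.2 ∪ Set.Iic y.2.1 := by
    intro t htle
    rcases le_or_gt t y.2.1 with h | h
    · exact Or.inr h
    · exact Or.inl ⟨h, htle⟩
  have : F y.2.2 ≤ ν (Set.Ioc y.2.1 y.2.2) + F y.2.1 :=
    (measure_mono hcover).trans (measure_union_le _ _)
  exact tsub_le_iff_right.mpr this

/-- **ADDIS-Spending controls PFER (and hence FWER).** If each null p-value is uniformly
conservative and independent of the past, the levels `α_i, λ_i, τ_i` are predictable and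
`(0,1)`-valued with `λ_i < τ_i` and `α_i < τ_i` a.s., and a.s.
`∑_{i : λ_i < P_i ≤ τ_i} α_i/(τ_i - λ_i) ≤ α`, then the expected number of false discoveries
is at most `α`; in particular the FWER is at most `α`. -/
theorem addis_spending_pfer_control
    {Ω : Type*} [MeasurableSpace Ω] (μ : Measure Ω) [IsProbabilityMeasure μ]
    (P : ℕ → Ω → ℝ) (hPmeas : ∀ i, Measurable (P i))
    (hPrange : ∀ i ω, P i ω ∈ Set.Icc (0 : ℝ) 1)
    (H0 : Set ℕ)
    (hconserv : ∀ i ∈ H0, ∀ x ∈ Set.Icc (0 : ℝ) 1, ∀ τ ∈ Set.Icc (0 : ℝ) 1,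
      μ {ω | P i ω ≤ x * τ} ≤ ENNReal.ofReal x * μ {ω | P i ω ≤ τ})
    (hindep : ∀ i ∈ H0,
      Indep (MeasurableSpace.comap (P i) inferInstance) (pastFiltration P i) μ)
    (α : ℝ) (hα : α ∈ Set.Ioo (0 : ℝ) 1)
    (alev lamlev τlev : ℕ → Ω → ℝ)
    (halev_meas : ∀ i, Measurable[pastFiltration P i] (alev i))
    (hlamlev_meas : ∀ i, Measurable[pastFiltration P i] (lamlev i))
    (hτlev_meas : ∀ i, Measurable[pastFiltration P i] (τlev i))
    (halev_range : ∀ i ω, alev i ω ∈ Set.Ioo (0 : ℝ) 1)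
    (hlamlev_range : ∀ i ω, lamlev i ω ∈ Set.Ioo (0 : ℝ) 1)
    (hτlev_range : ∀ i ω, τlev i ω ∈ Set.Ioo (0 : ℝ) 1)
    (h_lam_lt : ∀ i, ∀ᵐ ω ∂μ, lamlev i ω < τlev i ω)
    (h_alev_lt : ∀ i, ∀ᵐ ω ∂μ, alev i ω < τlev i ω)
    (hbudget : ∀ᵐ ω ∂μ,
      ∑' i, ENNReal.ofReal
          (if lamlev i ω < P i ω ∧ P i ω ≤ τlev i ω then
            alev i ω / (τlev i ω - lamlev i ω) else 0)
        ≤ ENNReal.ofReal α) :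
    (∫⁻ ω, ∑' i : H0, Set.indicator {ω' | P i ω' ≤ alev i ω'} (fun _ => (1 : ℝ≥0∞)) ω ∂μ)
        ≤ ENNReal.ofReal α ∧
      μ {ω | ∃ i ∈ H0, P i ω ≤ alev i ω} ≤ ENNReal.ofReal α := by
  classical
  have hpast_le : ∀ i, pastFiltration P i ≤ ‹MeasurableSpace Ω› := by
    intro i
    apply iSup₂_le
    intro j _
    exact (hPmeas j).comap_le
  have halev_meas' : ∀ i, Measurable (alev i) :=
    fun i => (halev_meas i).mono (hpast_le i) le_rfl
  have hlamlev_meas' : ∀ i, Measurable (lamlev i) :=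
    fun i => (hlamlev_meas i).mono (hpast_le i) le_rfl
  have hτlev_meas' : ∀ i, Measurable (τlev i) :=
    fun i => (hτlev_meas i).mono (hpast_le i) le_rfl
  -- the per-index budget spent
  set T : ℕ → Ω → ℝ≥0∞ := fun i ω => ENNReal.ofReal
      (if lamlev i ω < P i ω ∧ P i ω ≤ τlev i ω then
        alev i ω / (τlev i ω - lamlev i ω) else 0) with hT_def
  have hTmeas : ∀ i, Measurable (T i) := by
    intro i
    apply Measurable.ennreal_ofReal
    apply Measurable.ite _ ((halev_meas' i).div ((hτlev_meas' i).sub (hlamlev_meas' i)))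
      measurable_const
    exact (measurableSet_lt (hlamlev_meas' i) (hPmeas i)).inter
      (measurableSet_le (hPmeas i) (hτlev_meas' i))
  -- key step for each null index
  have hkey : ∀ i ∈ H0, μ {ω | P i ω ≤ alev i ω} ≤ ∫⁻ ω, T i ω ∂μ := by
    intro i hi
    have hg : Measurable[pastFiltration P i]
        (fun ω => (alev i ω, lamlev i ω, τlev i ω)) :=
      (halev_meas i).prodMk ((hlamlev_meas i).prodMk (hτlev_meas i))
    have hind : IndepFun (P i) (fun ω => (alev i ω, lamlev i ω, τlev i ω)) μ :=
      indep_mono_right' (hindep i hi) hg.comap_le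
    exact key_step μ (P i) (hPmeas i) (alev i) (lamlev i) (τlev i)
      (halev_meas' i) (hlamlev_meas' i) (hτlev_meas' i) hind (hconserv i hi)
      (halev_range i) (hlamlev_range i) (hτlev_range i) (h_lam_lt i) (h_alev_lt i)
  have hAmeas : ∀ i : ℕ, MeasurableSet {ω' | P i ω' ≤ alev i ω'} :=
    fun i => measurableSet_le (hPmeas i) (halev_meas' i)
  -- the total budget integral is at most α
  have hbudget_int : ∫⁻ ω, ∑' i, T i ω ∂μ ≤ ENNReal.ofReal α := by
    calc ∫⁻ ω, ∑' i, T i ω ∂μ ≤ ∫⁻ _, ENNReal.ofReal α ∂μ :=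
          lintegral_mono_ae hbudget
      _ = ENNReal.ofReal α := by simp
  -- main chain
  have hmain : (∫⁻ ω, ∑' i : H0,
      Set.indicator {ω' | P i ω' ≤ alev i ω'} (fun _ => (1 : ℝ≥0∞)) ω ∂μ)
      ≤ ENNReal.ofReal α := by
    rw [lintegral_tsum (fun i : H0 =>
      ((measurable_const.indicator (hAmeas i)).aemeasurable))]
    have h1 : ∀ i : H0, (∫⁻ ω,
        Set.indicator {ω' | P (i : ℕ) ω' ≤ alev (i : ℕ) ω'} (fun _ => (1 : ℝ≥0∞)) ω ∂μ)
        = μ {ω | P (i : ℕ) ω ≤ alev (i : ℕ) ω} := by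
      intro i
      rw [lintegral_indicator (hAmeas i), setLIntegral_const, one_mul]
    calc (∑' i : H0, ∫⁻ ω,
          Set.indicator {ω' | P (i : ℕ) ω' ≤ alev (i : ℕ) ω'} (fun _ => (1 : ℝ≥0∞)) ω ∂μ)
        = ∑' i : H0, μ {ω | P (i : ℕ) ω ≤ alev (i : ℕ) ω} := by
          exact tsum_congr h1
      _ ≤ ∑' i : H0, ∫⁻ ω, T (i : ℕ) ω ∂μ :=
          ENNReal.tsum_le_tsum (fun i => hkey i i.2)
      _ ≤ ∑' i : ℕ, ∫⁻ ω, T i ω ∂μ :=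
          ENNReal.tsum_comp_le_tsum_of_injective Subtype.coe_injective _
      _ = ∫⁻ ω, ∑' i, T i ω ∂μ :=
          (lintegral_tsum (fun i => (hTmeas i).aemeasurable)).symm
      _ ≤ ENNReal.ofReal α := hbudget_int
  refine ⟨hmain, ?_⟩
  -- FWER bound via union bound
  have hset : {ω | ∃ i ∈ H0, P i ω ≤ alev i ω} =
      ⋃ i : H0, {ω | P (i : ℕ) ω ≤ alev (i : ℕ) ω} := by
    ext ω
    simp only [Set.mem_setOf_eq, Set.mem_iUnion]
    constructor
    · rintro ⟨i, hi, h⟩; exact ⟨⟨i, hi⟩, h⟩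
    · rintro ⟨⟨i, hi⟩, h⟩; exact ⟨i, hi, h⟩
  rw [hset]
  refine (measure_iUnion_le _).trans ?_
  have h1 : ∀ i : H0, μ {ω | P (i : ℕ) ω ≤ alev (i : ℕ) ω} = (∫⁻ ω,
      Set.indicator {ω' | P (i : ℕ) ω' ≤ alev (i : ℕ) ω'} (fun _ => (1 : ℝ≥0∞)) ω ∂μ) := by
    intro i
    rw [lintegral_indicator (hAmeas i), setLIntegral_const, one_mul]
  calc (∑' i : H0, μ {ω | P (i : ℕ) ω ≤ alev (i : ℕ) ω})
      = ∑' i : H0, ∫⁻ ω,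
          Set.indicator {ω' | P (i : ℕ) ω' ≤ alev (i : ℕ) ω'} (fun _ => (1 : ℝ≥0∞)) ω ∂μ :=
        tsum_congr h1
    _ = ∫⁻ ω, ∑' i : H0,
          Set.indicator {ω' | P (i : ℕ) ω' ≤ alev (i : ℕ) ω'} (fun _ => (1 : ℝ≥0∞)) ω ∂μ :=
        (lintegral_tsum (fun i : H0 =>
          ((measurable_const.indicator (hAmeas i)).aemeasurable))).symm
    _ ≤ ENNReal.ofReal α := hmain
end

section
/- Let (P_i)_{i≥1} be [0,1]-valued p-values on a probability space, H0 ⊆ ℕ the index set of true nulls, and (L_i)_{i≥1} a fixed sequence of natural-number lags satisfying L_{i+1} ≤ L_i + 1. Assume each null p-value P_i (i ∈ H0) is uniformly conservative and is independent of the σ-algebra G_{i−L_i−1} = σ(P_1,…,P_{i−L_i−1}). Fix α ∈ (0,1) and for each i let α_i, λ_i, τ_i : Ω → (0,1) be G_{i−L_i−1}-measurable with λ_i < τ_i and α_i < τ_i almost surely, and assume that almost surely Σ_{i : λ_i < P_i ≤ τ_i} α_i/(τ_i−λ_i) ≤ α. Then E[ #{ i ∈ H0 : P_i ≤ α_i }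 ] ≤ α; in particular ℙ(∃ i ∈ H0 with P_i ≤ α_i) ≤ α. -/
open MeasureTheory ProbabilityTheory
open scoped ENNReal

private theorem addis_det {Ω : Type*} [MeasurableSpace Ω] (μ : Measure Ω) [IsProbabilityMeasure μ]
    (Q : Ω → ℝ)
    (hc : ∀ x ∈ Set.Icc (0:ℝ) 1, ∀ τ ∈ Set.Icc (0:ℝ) 1,
      μ {ω | Q ω ≤ x * τ} ≤ ENNReal.ofReal x * μ {ω | Q ω ≤ τ})
    (a l t : ℝ) (ha : a ∈ Set.Ioo (0:ℝ) 1) (hl : l ∈ Set.Ioo (0:ℝ) 1)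
    (ht : t ∈ Set.Ioo (0:ℝ) 1) (hlt : l < t) (hat : a < t) :
    μ {ω | Q ω ≤ a} ≤ ENNReal.ofReal (a / (t - l)) * μ {ω | l < Q ω ∧ Q ω ≤ t} := by
  obtain ⟨ha0, ha1⟩ := ha; obtain ⟨hl0, hl1⟩ := hl; obtain ⟨ht0, ht1⟩ := ht
  have htne : t ≠ 0 := ne_of_gt ht0
  have hA : μ {ω | Q ω ≤ a} ≤ ENNReal.ofReal (a / t) * μ {ω | Q ω ≤ t} := by
    have := hc (a / t) ⟨by positivity, by rw [div_le_one ht0]; linarith⟩ t ⟨le_of_lt ht0, le_of_lt ht1⟩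
    rwa [div_mul_cancel₀ a htne] at this
  have hL : μ {ω | Q ω ≤ l} ≤ ENNReal.ofReal (l / t) * μ {ω | Q ω ≤ t} := by
    have := hc (l / t) ⟨by positivity, by rw [div_le_one ht0]; linarith⟩ t ⟨le_of_lt ht0, le_of_lt ht1⟩
    rwa [div_mul_cancel₀ l htne] at this
  have hsub : μ {ω | Q ω ≤ t} ≤ μ {ω | Q ω ≤ l} + μ {ω | l < Q ω ∧ Q ω ≤ t} := by
    refine le_trans (measure_mono ?_) (measure_union_le _ _)
    intro ω hω; by_cases h : Q ω ≤ l
    · exact Or.inl h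
    · exact Or.inr ⟨lt_of_not_ge h, hω⟩
  -- pass to reals
  set A := (μ {ω | Q ω ≤ a}).toReal with hAdef
  set Lr := (μ {ω | Q ω ≤ l}).toReal
  set T := (μ {ω | Q ω ≤ t}).toReal
  set D := (μ {ω | l < Q ω ∧ Q ω ≤ t}).toReal
  have fin : ∀ s : Set Ω, μ s ≠ ⊤ := fun s => measure_ne_top μ s
  have hA' : A ≤ (a / t) * T := by
    have := ENNReal.toReal_mono (by finiteness) hA
    rwa [ENNReal.toReal_mul, ENNReal.toReal_ofReal (by positivity)] at this
  have hL' : Lr ≤ (l / t) * T := by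
    have := ENNReal.toReal_mono (by finiteness) hL
    rwa [ENNReal.toReal_mul, ENNReal.toReal_ofReal (by positivity)] at this
  have hsub' : T ≤ Lr + D := by
    have := ENNReal.toReal_mono (by finiteness) hsub
    rwa [ENNReal.toReal_add (fin _) (fin _)] at this
  have hT0 : 0 ≤ T := ENNReal.toReal_nonneg
  have hgoal : A ≤ (a / (t - l)) * D := by
    have h1 : (t - l) / t * T ≤ D := by
      have : Lr + ((t-l)/t) * T ≤ Lr + D := by
        calc Lr + (t-l)/t * T ≤ (l/t)*T + (t-l)/t*T := by nlinarith [hL']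
        _ = T := by field_simp; ring
        _ ≤ Lr + D := hsub'
      linarith
    have htl : 0 < t - l := by linarith
    calc A ≤ (a/t) * T := hA'
      _ = (a/(t-l)) * ((t-l)/t * T) := by field_simp
      _ ≤ (a/(t-l)) * D := by
          apply mul_le_mul_of_nonneg_left h1 (div_nonneg ha0.le htl.le)
  calc μ {ω | Q ω ≤ a} = ENNReal.ofReal A := (ENNReal.ofReal_toReal (fin _)).symm
    _ ≤ ENNReal.ofReal ((a/(t-l)) * D) := ENNReal.ofReal_le_ofReal hgoal
    _ = ENNReal.ofReal (a/(t-l)) * ENNReal.ofReal D := ENNReal.ofReal_mul (div_nonneg ha0.le (by linarith))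
    _ = _ := by rw [ENNReal.ofReal_toReal (fin _)]

private theorem addis_fubini {Ω : Type*} [mΩ : MeasurableSpace Ω] (μ : Measure Ω)
    [IsProbabilityMeasure μ] (Q : Ω → ℝ) (hQ : Measurable Q)
    (hc : ∀ x ∈ Set.Icc (0:ℝ) 1, ∀ τ ∈ Set.Icc (0:ℝ) 1,
      μ {ω | Q ω ≤ x * τ} ≤ ENNReal.ofReal x * μ {ω | Q ω ≤ τ})
    (V : Ω → ℝ × ℝ × ℝ) (hV : Measurable V)
    (hmap : Measure.map (fun ω => (Q ω, V ω)) μ = (Measure.map Q μ).prod (Measure.map V μ))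
    (hrange : ∀ ω, (V ω).1 ∈ Set.Ioo (0:ℝ) 1 ∧ (V ω).2.1 ∈ Set.Ioo (0:ℝ) 1 ∧
      (V ω).2.2 ∈ Set.Ioo (0:ℝ) 1)
    (hae : ∀ᵐ ω ∂μ, (V ω).2.1 < (V ω).2.2 ∧ (V ω).1 < (V ω).2.2) :
    μ {ω | Q ω ≤ (V ω).1} ≤
      ∫⁻ ω, ENNReal.ofReal
        (if (V ω).2.1 < Q ω ∧ Q ω ≤ (V ω).2.2 then (V ω).1 / ((V ω).2.2 - (V ω).2.1) else 0) ∂μ := by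
  set p := Measure.map Q μ with hp
  set ν := Measure.map V μ with hν
  have hpair : Measurable (fun ω => (Q ω, V ω)) := hQ.prodMk hV
  -- measurable sets
  have hs1 : MeasurableSet {q : ℝ × (ℝ × ℝ × ℝ) | q.1 ≤ q.2.1} :=
    measurableSet_le measurable_fst (measurable_fst.comp measurable_snd)
  have hs2 : MeasurableSet {q : ℝ × (ℝ × ℝ × ℝ) | q.2.2.1 < q.1 ∧ q.1 ≤ q.2.2.2} := by
    refine MeasurableSet.inter ?_ ?_
    · exact measurableSet_lt (measurable_fst.comp (measurable_snd.comp measurable_snd))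
        measurable_fst
    · exact measurableSet_le measurable_fst
        (measurable_snd.comp (measurable_snd.comp measurable_snd))
  have hgmeas : Measurable (fun q : ℝ × (ℝ × ℝ × ℝ) =>
      ENNReal.ofReal (if q.2.2.1 < q.1 ∧ q.1 ≤ q.2.2.2 then q.2.1 / (q.2.2.2 - q.2.2.1) else 0)) := by
    apply ENNReal.measurable_ofReal.comp
    apply Measurable.ite hs2
    · exact (measurable_fst.comp measurable_snd).div
        ((measurable_snd.comp (measurable_snd.comp measurable_snd)).sub
          (measurable_fst.comp (measurable_snd.comp measurable_snd)))
    · exact measurable_const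
  -- LHS as integral over ν
  have hLHS : μ {ω | Q ω ≤ (V ω).1} = ∫⁻ v, μ {ω | Q ω ≤ v.1} ∂ν := by
    have h1 : {ω | Q ω ≤ (V ω).1} = (fun ω => (Q ω, V ω)) ⁻¹' {q | q.1 ≤ q.2.1} := rfl
    rw [h1, ← Measure.map_apply hpair hs1, hmap, Measure.prod_apply_symm hs1]
    refine lintegral_congr fun v => ?_
    have h2 : ((fun x => (x, v)) ⁻¹' {q : ℝ × (ℝ × ℝ × ℝ) | q.1 ≤ q.2.1}) = {x : ℝ | x ≤ v.1} :=
      rfl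
    rw [h2, hp, Measure.map_apply hQ
      (show MeasurableSet {x : ℝ | x ≤ v.1} from measurableSet_le measurable_id measurable_const)]
    rfl
  -- RHS as integral over ν
  have hRHS : (∫⁻ ω, ENNReal.ofReal
        (if (V ω).2.1 < Q ω ∧ Q ω ≤ (V ω).2.2 then (V ω).1 / ((V ω).2.2 - (V ω).2.1) else 0) ∂μ)
      = ∫⁻ v, ENNReal.ofReal (v.1 / (v.2.2 - v.2.1)) * μ {ω | v.2.1 < Q ω ∧ Q ω ≤ v.2.2} ∂ν := by
    have h1 : (∫⁻ ω, ENNReal.ofReal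
        (if (V ω).2.1 < Q ω ∧ Q ω ≤ (V ω).2.2 then (V ω).1 / ((V ω).2.2 - (V ω).2.1) else 0) ∂μ)
        = ∫⁻ q, ENNReal.ofReal
            (if q.2.2.1 < q.1 ∧ q.1 ≤ q.2.2.2 then q.2.1 / (q.2.2.2 - q.2.2.1) else 0)
            ∂((p.prod ν)) := by
      rw [← hmap, lintegral_map hgmeas hpair]
    rw [h1, lintegral_prod_symm _ hgmeas.aemeasurable]
    refine lintegral_congr fun v => ?_
    have h2 : (fun x => ENNReal.ofReal
        (if v.2.1 < x ∧ x ≤ v.2.2 then v.1 / (v.2.2 - v.2.1) else 0))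
        = Set.indicator {x : ℝ | v.2.1 < x ∧ x ≤ v.2.2}
            (fun _ => ENNReal.ofReal (v.1 / (v.2.2 - v.2.1))) := by
      ext x
      by_cases h : v.2.1 < x ∧ x ≤ v.2.2 <;> simp [Set.indicator_apply, h]
    have hsv : MeasurableSet {x : ℝ | v.2.1 < x ∧ x ≤ v.2.2} :=
      (measurableSet_lt measurable_const measurable_id).inter
        (measurableSet_le measurable_id measurable_const)
    calc (∫⁻ x, ENNReal.ofReal
          (if v.2.1 < x ∧ x ≤ v.2.2 then v.1 / (v.2.2 - v.2.1) else 0) ∂p)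
        = ENNReal.ofReal (v.1 / (v.2.2 - v.2.1)) * p {x : ℝ | v.2.1 < x ∧ x ≤ v.2.2} := by
          rw [show (∫⁻ x, ENNReal.ofReal
            (if v.2.1 < x ∧ x ≤ v.2.2 then v.1 / (v.2.2 - v.2.1) else 0) ∂p)
            = ∫⁻ x, Set.indicator {x : ℝ | v.2.1 < x ∧ x ≤ v.2.2}
                (fun _ => ENNReal.ofReal (v.1 / (v.2.2 - v.2.1))) x ∂p from by rw [← h2],
            lintegral_indicator_const hsv]
      _ = ENNReal.ofReal (v.1 / (v.2.2 - v.2.1)) * μ {ω | v.2.1 < Q ω ∧ Q ω ≤ v.2.2} := by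
          rw [hp, Measure.map_apply hQ hsv]
          rfl
  rw [hLHS, hRHS]
  -- a.e. properties over ν
  have hprop : ∀ᵐ v ∂ν, (0 < v.1 ∧ v.1 < 1) ∧ (0 < v.2.1 ∧ v.2.1 < 1) ∧
      (0 < v.2.2 ∧ v.2.2 < 1) ∧ v.2.1 < v.2.2 ∧ v.1 < v.2.2 := by
    rw [hν, ae_map_iff hV.aemeasurable]
    · filter_upwards [hae] with ω h
      exact ⟨(hrange ω).1, (hrange ω).2.1, (hrange ω).2.2, h.1, h.2⟩
    · apply MeasurableSet.inter
      · exact (measurableSet_lt measurable_const measurable_fst).inter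
          (measurableSet_lt measurable_fst measurable_const)
      apply MeasurableSet.inter
      · exact (measurableSet_lt measurable_const (measurable_fst.comp measurable_snd)).inter
          (measurableSet_lt (measurable_fst.comp measurable_snd) measurable_const)
      apply MeasurableSet.inter
      · exact (measurableSet_lt measurable_const (measurable_snd.comp measurable_snd)).inter
          (measurableSet_lt (measurable_snd.comp measurable_snd) measurable_const)
      apply MeasurableSet.inter
      · exact measurableSet_lt (measurable_fst.comp measurable_snd)
          (measurable_snd.comp measurable_snd)
      · exact measurableSet_lt measurable_fst (measurable_snd.comp measurable_snd)
  refine lintegral_mono_ae ?_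
  filter_upwards [hprop] with v hv
  exact addis_det μ Q hc v.1 v.2.1 v.2.2 ⟨hv.1.1, hv.1.2⟩ ⟨hv.2.1.1, hv.2.1.2⟩
    ⟨hv.2.2.1.1, hv.2.2.1.2⟩ hv.2.2.2.1 hv.2.2.2.2

/-- **Altered ADDIS-Spending under local dependence controls PFER (hence FWER).**
Given lags `L i` with `L (i+1) ≤ L i + 1`, suppose each null p-value `P i` is uniformly
conservative and independent of the σ-algebra generated by the p-values more than `L i`
steps in the past; the levels `α_i, λ_i, τ_i` are measurable with respect to that lagged
σ-algebra and `(0,1)`-valued with `λ_i < τ_i` and `α_i < τ_i` a.s.; and a.s.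
`∑_{i : λ_i < P_i ≤ τ_i} α_i/(τ_i - λ_i) ≤ α`. Then the expected number of false
discoveries is at most `α`; in particular the FWER is at most `α`. -/
theorem addis_spending_local_dependence_pfer_control
    {Ω : Type*} [MeasurableSpace Ω] (μ : Measure Ω) [IsProbabilityMeasure μ]
    (P : ℕ → Ω → ℝ) (hPmeas : ∀ i, Measurable (P i))
    (hPrange : ∀ i ω, P i ω ∈ Set.Icc (0 : ℝ) 1)
    (H0 : Set ℕ)
    (L : ℕ → ℕ) (hL : ∀ i, L (i + 1) ≤ L i + 1)
    (hconserv : ∀ i ∈ H0, ∀ x ∈ Set.Icc (0 : ℝ) 1, ∀ τ ∈ Set.Icc (0 : ℝ) 1,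
      μ {ω | P i ω ≤ x * τ} ≤ ENNReal.ofReal x * μ {ω | P i ω ≤ τ})
    (hindep : ∀ i ∈ H0,
      Indep (MeasurableSpace.comap (P i) inferInstance) (pastFiltration P (i - L i)) μ)
    (α : ℝ) (hα : α ∈ Set.Ioo (0 : ℝ) 1)
    (alev lamlev τlev : ℕ → Ω → ℝ)
    (halev_meas : ∀ i, Measurable[pastFiltration P (i - L i)] (alev i))
    (hlamlev_meas : ∀ i, Measurable[pastFiltration P (i - L i)] (lamlev i))
    (hτlev_meas : ∀ i, Measurable[pastFiltration P (i - L i)] (τlev i))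
    (halev_range : ∀ i ω, alev i ω ∈ Set.Ioo (0 : ℝ) 1)
    (hlamlev_range : ∀ i ω, lamlev i ω ∈ Set.Ioo (0 : ℝ) 1)
    (hτlev_range : ∀ i ω, τlev i ω ∈ Set.Ioo (0 : ℝ) 1)
    (h_lam_lt : ∀ i, ∀ᵐ ω ∂μ, lamlev i ω < τlev i ω)
    (h_alev_lt : ∀ i, ∀ᵐ ω ∂μ, alev i ω < τlev i ω)
    (hbudget : ∀ᵐ ω ∂μ,
      ∑' i, ENNReal.ofReal
          (if lamlev i ω < P i ω ∧ P i ω ≤ τlev i ω then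
            alev i ω / (τlev i ω - lamlev i ω) else 0)
        ≤ ENNReal.ofReal α) :
    (∫⁻ ω, ∑' i : H0, Set.indicator {ω' | P i ω' ≤ alev i ω'} (fun _ => (1 : ℝ≥0∞)) ω ∂μ)
        ≤ ENNReal.ofReal α ∧
      μ {ω | ∃ i ∈ H0, P i ω ≤ alev i ω} ≤ ENNReal.ofReal α := by
  classical
  have hGle : ∀ n, pastFiltration P n ≤ ‹MeasurableSpace Ω› := fun n =>
    iSup₂_le fun j _ => (hPmeas j).comap_le
  have halevm : ∀ i, Measurable (alev i) := fun i => (halev_meas i).mono (hGle _) le_rfl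
  have hlamm : ∀ i, Measurable (lamlev i) := fun i => (hlamlev_meas i).mono (hGle _) le_rfl
  have hτm : ∀ i, Measurable (τlev i) := fun i => (hτlev_meas i).mono (hGle _) le_rfl
  have hsetmeas : ∀ i, MeasurableSet {ω | P i ω ≤ alev i ω} := fun i =>
    measurableSet_le (hPmeas i) (halevm i)
  have hBmeas : ∀ i, Measurable (fun ω => ENNReal.ofReal
      (if lamlev i ω < P i ω ∧ P i ω ≤ τlev i ω then
        alev i ω / (τlev i ω - lamlev i ω) else 0)) := by
    intro i
    apply ENNReal.measurable_ofReal.comp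
    refine Measurable.ite ?_ ((halevm i).div ((hτm i).sub (hlamm i))) measurable_const
    exact (measurableSet_lt (hlamm i) (hPmeas i)).inter (measurableSet_le (hPmeas i) (hτm i))
  have hkey : ∀ i ∈ H0, μ {ω | P i ω ≤ alev i ω} ≤
      ∫⁻ ω, ENNReal.ofReal
        (if lamlev i ω < P i ω ∧ P i ω ≤ τlev i ω then
          alev i ω / (τlev i ω - lamlev i ω) else 0) ∂μ := by
    intro i hi
    have hVG : Measurable[pastFiltration P (i - L i)]
        (fun ω => (alev i ω, lamlev i ω, τlev i ω)) :=
      (halev_meas i).prodMk ((hlamlev_meas i).prodMk (hτlev_meas i))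
    have hV : Measurable (fun ω => (alev i ω, lamlev i ω, τlev i ω)) :=
      hVG.mono (hGle _) le_rfl
    have hIF : IndepFun (P i) (fun ω => (alev i ω, lamlev i ω, τlev i ω)) μ :=
      indep_of_indep_of_le_right (hindep i hi) hVG.comap_le
    have hmap := (indepFun_iff_map_prod_eq_prod_map_map (hPmeas i).aemeasurable
      hV.aemeasurable).mp hIF
    exact addis_fubini μ (P i) (hPmeas i) (hconserv i hi)
      (fun ω => (alev i ω, lamlev i ω, τlev i ω)) hV hmap
      (fun ω => ⟨halev_range i ω, hlamlev_range i ω, hτlev_range i ω⟩)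
      (by filter_upwards [h_lam_lt i, h_alev_lt i] with ω h1 h2; exact ⟨h1, h2⟩)
  have hsum : (∑' i : H0, μ {ω | P (i : ℕ) ω ≤ alev (i : ℕ) ω}) ≤ ENNReal.ofReal α := by
    calc (∑' i : H0, μ {ω | P (i : ℕ) ω ≤ alev (i : ℕ) ω})
        ≤ ∑' i : H0, ∫⁻ ω, ENNReal.ofReal
            (if lamlev (i : ℕ) ω < P (i : ℕ) ω ∧ P (i : ℕ) ω ≤ τlev (i : ℕ) ω then
              alev (i : ℕ) ω / (τlev (i : ℕ) ω - lamlev (i : ℕ) ω) else 0) ∂μ :=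
          ENNReal.tsum_le_tsum fun i => hkey i i.2
      _ ≤ ∑' i : ℕ, ∫⁻ ω, ENNReal.ofReal
            (if lamlev i ω < P i ω ∧ P i ω ≤ τlev i ω then
              alev i ω / (τlev i ω - lamlev i ω) else 0) ∂μ :=
          ENNReal.tsum_comp_le_tsum_of_injective Subtype.val_injective _
      _ = ∫⁻ ω, ∑' i : ℕ, ENNReal.ofReal
            (if lamlev i ω < P i ω ∧ P i ω ≤ τlev i ω then
              alev i ω / (τlev i ω - lamlev i ω) else 0) ∂μ :=
          (lintegral_tsum fun i => (hBmeas i).aemeasurable).symm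
      _ ≤ ∫⁻ _ω, ENNReal.ofReal α ∂μ := lintegral_mono_ae hbudget
      _ = ENNReal.ofReal α := by simp
  constructor
  · calc (∫⁻ ω, ∑' i : H0, Set.indicator {ω' | P (i : ℕ) ω' ≤ alev (i : ℕ) ω'}
          (fun _ => (1 : ℝ≥0∞)) ω ∂μ)
        = ∑' i : H0, ∫⁻ ω, Set.indicator {ω' | P (i : ℕ) ω' ≤ alev (i : ℕ) ω'}
            (fun _ => (1 : ℝ≥0∞)) ω ∂μ :=
          lintegral_tsum fun i => (measurable_const.indicator (hsetmeas i)).aemeasurable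
      _ = ∑' i : H0, μ {ω | P (i : ℕ) ω ≤ alev (i : ℕ) ω} := by
          refine tsum_congr fun i => ?_
          rw [lintegral_indicator_const (hsetmeas (i : ℕ)), one_mul]
      _ ≤ ENNReal.ofReal α := hsum
  · have hset : {ω | ∃ i ∈ H0, P i ω ≤ alev i ω} = ⋃ i ∈ H0, {ω | P i ω ≤ alev i ω} := by
      ext ω; simp
    rw [hset]
    exact le_trans (measure_biUnion_le μ (Set.to_countable H0) _) hsum
end

section
/- Fix α ∈ (0,1/2), μ_A > 0 and π_A ∈ (0,1). For q > 1 define f_∞(q) = Σ_{i=1}^∞ π_A · Φ( Φ⁻¹( α·i^{−q}/ζ(q) ) + μ_A ). Then f_∞(q) is finite for every q > 1, and f_∞ is monotonically decreasing on (1,∞). -/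
open MeasureTheory ProbabilityTheory

/-- The inverse `Φ⁻¹` of the standard normal CDF (on `(0,1)`). -/
noncomputable def stdNormalQuantile : ℝ → ℝ :=
  Function.invFun stdNormalCDF

/-- The (real) Riemann zeta function `ζ(q) = ∑_{i=1}^∞ i^{-q}`. -/
noncomputable def zetaReal (q : ℝ) : ℝ :=
  ∑' i : ℕ, ((i : ℝ) + 1) ^ (-q)

namespace AlphaSpendAux

open Real Set Filter Topology

/-- The standard normal density. -/
noncomputable def phi (u : ℝ) : ℝ := (Real.sqrt (2 * π))⁻¹ * Real.exp (-u ^ 2 / 2)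

lemma phi_eq : gaussianPDFReal 0 1 = phi := by
  funext u
  simp [gaussianPDFReal, phi]

lemma phi_pos (u : ℝ) : 0 < phi u := by
  have h2π : 0 < 2 * π := by positivity
  unfold phi; positivity

lemma phi_nonneg (u : ℝ) : 0 ≤ phi u := (phi_pos u).le

lemma phi_cont : Continuous phi := by
  unfold phi
  fun_prop

lemma phi_integrable : Integrable phi := by
  rw [← phi_eq]; exact integrable_gaussianPDFReal 0 1

lemma integral_phi : ∫ u, phi u = 1 := by
  rw [← phi_eq]; exact integral_gaussianPDFReal_eq_one 0 one_ne_zero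

lemma Phi_eq_integral (x : ℝ) : stdNormalCDF x = ∫ u in Iic x, phi u := by
  rw [stdNormalCDF, gaussianReal_apply_eq_integral 0 one_ne_zero, phi_eq,
    ENNReal.toReal_ofReal]
  exact setIntegral_nonneg measurableSet_Iic fun u _ => phi_nonneg u

lemma Phi_nonneg (x : ℝ) : 0 ≤ stdNormalCDF x := ENNReal.toReal_nonneg

lemma Phi_le_one (x : ℝ) : stdNormalCDF x ≤ 1 := by
  rw [stdNormalCDF]
  have := (measure_mono (Set.subset_univ (Iic x)) :
    gaussianReal 0 1 (Iic x) ≤ gaussianReal 0 1 univ)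
  rw [measure_univ] at this
  simpa using ENNReal.toReal_mono (by simp) this

lemma Phi_sub {s t : ℝ} : stdNormalCDF t - stdNormalCDF s = ∫ u in s..t, phi u := by
  rw [Phi_eq_integral, Phi_eq_integral]
  exact intervalIntegral.integral_Iic_sub_Iic phi_integrable.integrableOn phi_integrable.integrableOn

lemma Phi_mono : Monotone stdNormalCDF := by
  intro x y hxy
  have h : 0 ≤ ∫ u in x..y, phi u :=
    intervalIntegral.integral_nonneg hxy fun u _ => phi_nonneg u
  have := Phi_sub (s := x) (t := y)
  linarith

lemma Phi_eq_cdf : stdNormalCDF = ⇑(cdf (gaussianReal 0 1)) :=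
  funext fun x => (cdf_eq_real _ x).symm

lemma Phi_tendsto_atBot : Tendsto stdNormalCDF atBot (𝓝 0) := by
  rw [Phi_eq_cdf]; exact tendsto_cdf_atBot _

lemma Phi_tendsto_atTop : Tendsto stdNormalCDF atTop (𝓝 1) := by
  rw [Phi_eq_cdf]; exact tendsto_cdf_atTop _

lemma Phi_continuous : Continuous stdNormalCDF := by
  have hL : LipschitzWith ⟨(Real.sqrt (2 * π))⁻¹, by positivity⟩ stdNormalCDF := by
    apply LipschitzWith.of_dist_le_mul
    intro x y
    wlog hxy : y ≤ x generalizing x y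
    · rw [dist_comm, dist_comm x y]; exact this _ _ (le_of_not_ge hxy)
    have h1 : stdNormalCDF x - stdNormalCDF y = ∫ u in y..x, phi u := Phi_sub
    have h2 : ∫ u in y..x, phi u ≤ ∫ _u in y..x, (Real.sqrt (2 * π))⁻¹ := by
      apply intervalIntegral.integral_mono_on hxy
        (phi_cont.intervalIntegrable _ _) (intervalIntegrable_const)
      intro u _
      unfold phi
      nth_rewrite 2 [← mul_one (Real.sqrt (2 * π))⁻¹]
      have : Real.exp (-u ^ 2 / 2) ≤ 1 := Real.exp_le_one_iff.2 (by nlinarith [sq_nonneg u])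
      have h0 : (0:ℝ) ≤ (Real.sqrt (2 * π))⁻¹ := by positivity
      nlinarith [Real.exp_pos (-u ^ 2 / 2)]
    rw [intervalIntegral.integral_const, smul_eq_mul] at h2
    have h0 : 0 ≤ stdNormalCDF x - stdNormalCDF y := sub_nonneg.2 (Phi_mono hxy)
    rw [Real.dist_eq, Real.dist_eq, abs_of_nonneg h0, abs_of_nonneg (sub_nonneg.2 hxy)]
    push_cast
    change stdNormalCDF x - stdNormalCDF y ≤ (Real.sqrt (2 * π))⁻¹ * (x - y)
    linarith
  exact hL.continuous


lemma Phi_zero : stdNormalCDF 0 = 1 / 2 := by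
  have hsym : ∫ u in Iic (0:ℝ), phi u = ∫ u in Ioi (0:ℝ), phi u := by
    have h1 := integral_comp_neg_Ioi (0:ℝ) phi
    rw [neg_zero] at h1
    rw [← h1]
    apply setIntegral_congr_fun measurableSet_Ioi
    intro u _
    unfold phi
    ring_nf
  have htot : (∫ u in Iic (0:ℝ), phi u) + ∫ u in Ioi (0:ℝ), phi u = 1 := by
    rw [intervalIntegral.integral_Iic_add_Ioi phi_integrable.integrableOn
      phi_integrable.integrableOn, integral_phi]
  rw [Phi_eq_integral]
  linarith

lemma Phi_exists {y : ℝ} (hy : y ∈ Ioo (0:ℝ) 1) : ∃ x, stdNormalCDF x = y := by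
  obtain ⟨a, ha⟩ : ∃ a, stdNormalCDF a < y := by
    have := Phi_tendsto_atBot.eventually_lt_const hy.1
    exact this.exists
  obtain ⟨b, hb⟩ : ∃ b, y < stdNormalCDF b := by
    have := Phi_tendsto_atTop.eventually_const_lt hy.2
    exact this.exists
  have hab : a ≤ b := by
    by_contra h
    exact absurd (Phi_mono (le_of_not_ge h)) (by linarith)
  have := intermediate_value_Icc hab (Phi_continuous.continuousOn)
  obtain ⟨x, _, hx⟩ := this ⟨ha.le, hb.le⟩
  exact ⟨x, hx⟩

lemma Phi_quantile {y : ℝ} (hy : y ∈ Ioo (0:ℝ) 1) :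
    stdNormalCDF (stdNormalQuantile y) = y :=
  Function.invFun_eq (Phi_exists hy)

lemma quantile_mono {x y : ℝ} (hx : x ∈ Ioo (0:ℝ) 1) (hy : y ∈ Ioo (0:ℝ) 1)
    (hxy : x ≤ y) : stdNormalQuantile x ≤ stdNormalQuantile y := by
  rcases eq_or_lt_of_le hxy with h | h
  · rw [h]
  by_contra hc
  have := Phi_mono (le_of_not_ge hc)
  rw [Phi_quantile hx, Phi_quantile hy] at this
  linarith

lemma quantile_neg {y : ℝ} (hy : y ∈ Ioo (0:ℝ) (1/2)) : stdNormalQuantile y < 0 := by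
  by_contra hc
  push_neg at hc
  have := Phi_mono hc
  rw [Phi_quantile ⟨hy.1, by linarith [hy.2]⟩, Phi_zero] at this
  linarith [hy.2]

lemma phi_shift (μ u : ℝ) : phi (u + μ) = phi u * Real.exp (-(μ * u) - μ ^ 2 / 2) := by
  unfold phi
  rw [mul_assoc, ← Real.exp_add]
  congr 1
  ring

lemma Phi_shift_sub {μ s t : ℝ} (hst : s ≤ t) :
    stdNormalCDF (t + μ) - stdNormalCDF (s + μ)
      = ∫ u in s..t, phi u * Real.exp (-(μ * u) - μ ^ 2 / 2) := by
  rw [Phi_sub, ← intervalIntegral.integral_comp_add_right (fun u => phi u) μ]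
  exact intervalIntegral.integral_congr fun u _ => phi_shift μ u

lemma shift_integrable (μ s t : ℝ) :
    IntervalIntegrable (fun u => phi u * Real.exp (-(μ * u) - μ ^ 2 / 2)) volume s t := by
  exact (phi_cont.mul (by fun_prop)).intervalIntegrable _ _

lemma I1 {μ s t : ℝ} (hμ : 0 ≤ μ) (hst : s ≤ t) :
    stdNormalCDF (t + μ) - stdNormalCDF (s + μ)
      ≤ Real.exp (-(μ * s) - μ ^ 2 / 2) * (stdNormalCDF t - stdNormalCDF s) := by
  rw [Phi_shift_sub hst, Phi_sub]
  rw [← intervalIntegral.integral_const_mul]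
  apply intervalIntegral.integral_mono_on hst (shift_integrable μ s t)
    ((phi_cont.intervalIntegrable _ _).const_mul _)
  intro u hu
  rw [mul_comm (Real.exp _) (phi u)]
  apply mul_le_mul_of_nonneg_left _ (phi_nonneg u)
  apply Real.exp_le_exp.2
  have : μ * s ≤ μ * u := mul_le_mul_of_nonneg_left hu.1 hμ
  linarith

lemma I2 {μ s t : ℝ} (hμ : 0 ≤ μ) (hst : s ≤ t) :
    Real.exp (-(μ * t) - μ ^ 2 / 2) * (stdNormalCDF t - stdNormalCDF s)
      ≤ stdNormalCDF (t + μ) - stdNormalCDF (s + μ) := by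
  rw [Phi_shift_sub hst, Phi_sub]
  rw [← intervalIntegral.integral_const_mul]
  apply intervalIntegral.integral_mono_on hst
    ((phi_cont.intervalIntegrable _ _).const_mul _) (shift_integrable μ s t)
  intro u hu
  rw [mul_comm (Real.exp _) (phi u)]
  apply mul_le_mul_of_nonneg_left _ (phi_nonneg u)
  apply Real.exp_le_exp.2
  have : μ * u ≤ μ * t := mul_le_mul_of_nonneg_left hu.2 hμ
  linarith

lemma I3 {μ t : ℝ} (hμ : 0 ≤ μ) :
    Real.exp (-(μ * t) - μ ^ 2 / 2) * stdNormalCDF t ≤ stdNormalCDF (t + μ) := by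
  have hlim : Tendsto (fun s => Real.exp (-(μ * t) - μ ^ 2 / 2) *
      (stdNormalCDF t - stdNormalCDF s)) atBot
      (𝓝 (Real.exp (-(μ * t) - μ ^ 2 / 2) * (stdNormalCDF t - 0))) :=
    ((tendsto_const_nhds.sub Phi_tendsto_atBot).const_mul _)
  rw [sub_zero] at hlim
  apply le_of_tendsto hlim
  filter_upwards [eventually_le_atBot t] with s hs
  calc Real.exp (-(μ * t) - μ ^ 2 / 2) * (stdNormalCDF t - stdNormalCDF s)
      ≤ stdNormalCDF (t + μ) - stdNormalCDF (s + μ) := I2 hμ hs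
    _ ≤ stdNormalCDF (t + μ) := by linarith [Phi_nonneg (s + μ)]

lemma I4 {t : ℝ} (ht : t ≤ 0) : stdNormalCDF t ≤ Real.exp (-t ^ 2 / 2) := by
  rcases eq_or_lt_of_le ht with h | h
  · rw [h]; simpa using Phi_le_one 0
  have h3 := I3 (μ := -t) (t := t) (by linarith)
  rw [add_neg_cancel] at h3
  have he : Real.exp (-(-t * t) - (-t) ^ 2 / 2) = Real.exp (t ^ 2 / 2) := by
    congr 1; ring
  rw [he] at h3
  have h0 : stdNormalCDF 0 ≤ 1 := Phi_le_one 0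
  have hexp : (0:ℝ) < Real.exp (t ^ 2 / 2) := Real.exp_pos _
  rw [show -t ^ 2 / 2 = -(t ^ 2 / 2) by ring, Real.exp_neg, ← one_div,
    le_div_iff₀ hexp]
  nlinarith

lemma I5 {t : ℝ} (ht : t ≤ 0) : phi (t - 1) ≤ stdNormalCDF t := by
  have h1 : stdNormalCDF t - stdNormalCDF (t - 1) = ∫ u in (t-1)..t, phi u := Phi_sub
  have h2 : (∫ _u in (t-1)..t, phi (t - 1)) ≤ ∫ u in (t-1)..t, phi u := by
    apply intervalIntegral.integral_mono_on (by linarith) intervalIntegrable_const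
      (phi_cont.intervalIntegrable _ _)
    intro u hu
    unfold phi
    apply mul_le_mul_of_nonneg_left _ (by positivity)
    apply Real.exp_le_exp.2
    have husq : u ^ 2 ≤ (t - 1) ^ 2 := by nlinarith [hu.1, hu.2]
    linarith
  rw [intervalIntegral.integral_const, smul_eq_mul] at h2
  have h3 : (t - (t - 1)) * phi (t - 1) = phi (t - 1) := by ring_nf
  rw [h3] at h2
  linarith [Phi_nonneg (t - 1)]


lemma QB1 {b : ℝ} (hb : b ∈ Ioo (0:ℝ) (1/2)) :
    -Real.sqrt (2 * Real.log (1 / b)) ≤ stdNormalQuantile b := by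
  set T := stdNormalQuantile b with hT
  have hTneg : T < 0 := quantile_neg hb
  have hPhiT : stdNormalCDF T = b := Phi_quantile ⟨hb.1, by linarith [hb.2]⟩
  have h4 : b ≤ Real.exp (-T ^ 2 / 2) := by
    rw [← hPhiT]; exact I4 hTneg.le
  have hlog : Real.log b ≤ -T ^ 2 / 2 := by
    have := Real.log_le_log hb.1 h4
    rwa [Real.log_exp] at this
  have h5 : T ^ 2 ≤ 2 * Real.log (1 / b) := by
    rw [Real.log_div one_ne_zero (ne_of_gt hb.1), Real.log_one]
    linarith
  have := Real.sqrt_le_sqrt h5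
  rw [Real.sqrt_sq_eq_abs, abs_of_neg hTneg] at this
  linarith

lemma QB2 {b : ℝ} (hb : b ∈ Ioo (0:ℝ) (1/2)) :
    Real.exp (-(stdNormalQuantile b) ^ 2 / 2)
      ≤ Real.sqrt (2 * π) * Real.exp (-(stdNormalQuantile b) + 1/2) * b := by
  set T := stdNormalQuantile b with hT
  have hTneg : T < 0 := quantile_neg hb
  have hPhiT : stdNormalCDF T = b := Phi_quantile ⟨hb.1, by linarith [hb.2]⟩
  have h5 : phi (T - 1) ≤ b := by rw [← hPhiT]; exact I5 hTneg.le
  unfold phi at h5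
  have hsq : (0:ℝ) < Real.sqrt (2 * π) := by positivity
  have key : Real.exp (-(T - 1) ^ 2 / 2) ≤ Real.sqrt (2 * π) * b := by
    have h6 := mul_le_mul_of_nonneg_left h5 hsq.le
    rwa [← mul_assoc, mul_inv_cancel₀ (ne_of_gt hsq), one_mul] at h6
  have hexpand : Real.exp (-T ^ 2 / 2)
      = Real.exp (-(T - 1) ^ 2 / 2) * Real.exp (-T + 1/2) := by
    rw [← Real.exp_add]; congr 1; ring
  rw [hexpand]
  calc Real.exp (-(T - 1) ^ 2 / 2) * Real.exp (-T + 1/2)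
      ≤ (Real.sqrt (2 * π) * b) * Real.exp (-T + 1/2) :=
        mul_le_mul_of_nonneg_right key (Real.exp_pos _).le
    _ = Real.sqrt (2 * π) * Real.exp (-T + 1/2) * b := by ring

/-- `Φ` is positive at nonpositive points (all we need). -/
lemma Phi_pos_of_nonpos {t : ℝ} (ht : t ≤ 0) : 0 < stdNormalCDF t :=
  lt_of_lt_of_le (phi_pos (t - 1)) (I5 ht)

/-- The global bound on `g(b) = Φ(Φ⁻¹(b) + μ)`. -/
lemma GB {μ b : ℝ} (hμ : 0 < μ) (hb : b ∈ Ioo (0:ℝ) (1/2)) :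
    stdNormalCDF (stdNormalQuantile b + μ)
      ≤ (max (Real.sqrt (2 * π) * Real.exp (1/2)) (stdNormalCDF (-μ))⁻¹)
          * b * Real.exp ((μ + 1) * Real.sqrt (2 * Real.log (1 / b))) := by
  set T := stdNormalQuantile b with hT
  set M := max (Real.sqrt (2 * π) * Real.exp (1/2)) (stdNormalCDF (-μ))⁻¹ with hM
  have hTneg : T < 0 := quantile_neg hb
  have hPhiT : stdNormalCDF T = b := Phi_quantile ⟨hb.1, by linarith [hb.2]⟩
  have hS : -T ≤ Real.sqrt (2 * Real.log (1 / b)) := by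
    have := QB1 hb; rw [← hT] at this; linarith
  have hSnn : (0:ℝ) ≤ Real.sqrt (2 * Real.log (1 / b)) := Real.sqrt_nonneg _
  rcases le_or_gt (T + μ) 0 with hc | hc
  · -- Chernoff case
    have h1 : stdNormalCDF (T + μ) ≤ Real.exp (-(T + μ) ^ 2 / 2) := I4 hc
    have h2 : Real.exp (-(T + μ) ^ 2 / 2)
        = Real.exp (-T ^ 2 / 2) * Real.exp (-(T * μ)) * Real.exp (-μ ^ 2 / 2) := by
      rw [← Real.exp_add, ← Real.exp_add]; congr 1; ring
    have h3 : Real.exp (-μ ^ 2 / 2) ≤ 1 := Real.exp_le_one_iff.2 (by nlinarith)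
    have h4 := QB2 hb
    rw [← hT] at h4
    have hq2 : Real.exp (-T ^ 2 / 2) * Real.exp (-(T * μ))
        ≤ (Real.sqrt (2 * π) * Real.exp (-T + 1/2) * b) * Real.exp (-(T * μ)) :=
      mul_le_mul_of_nonneg_right h4 (Real.exp_pos _).le
    have hcomb : Real.sqrt (2 * π) * Real.exp (-T + 1/2) * b * Real.exp (-(T * μ))
        = (Real.sqrt (2 * π) * Real.exp (1/2)) * b * Real.exp ((μ + 1) * (-T)) := by
      calc Real.sqrt (2 * π) * Real.exp (-T + 1/2) * b * Real.exp (-(T * μ))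
          = Real.sqrt (2 * π) * b * (Real.exp (-T + 1/2) * Real.exp (-(T * μ))) := by ring
        _ = Real.sqrt (2 * π) * b * Real.exp ((-T + 1/2) + -(T * μ)) := by
            rw [← Real.exp_add]
        _ = Real.sqrt (2 * π) * b * Real.exp ((1/2) + (μ + 1) * (-T)) := by
            congr 1; ring
        _ = Real.sqrt (2 * π) * b * (Real.exp (1/2) * Real.exp ((μ + 1) * (-T))) := by
            rw [← Real.exp_add]
        _ = (Real.sqrt (2 * π) * Real.exp (1/2)) * b * Real.exp ((μ + 1) * (-T)) := by ring
    have hexpmono : Real.exp ((μ + 1) * (-T)) ≤ Real.exp ((μ + 1) * Real.sqrt (2 * Real.log (1/b))) := by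
      apply Real.exp_le_exp.2
      apply mul_le_mul_of_nonneg_left hS (by linarith)
    have hMge : Real.sqrt (2 * π) * Real.exp (1/2) ≤ M := le_max_left _ _
    calc stdNormalCDF (T + μ) ≤ Real.exp (-(T + μ) ^ 2 / 2) := h1
      _ = Real.exp (-T ^ 2 / 2) * Real.exp (-(T * μ)) * Real.exp (-μ ^ 2 / 2) := h2
      _ ≤ Real.exp (-T ^ 2 / 2) * Real.exp (-(T * μ)) * 1 := by
          apply mul_le_mul_of_nonneg_left h3 (by positivity)
      _ = Real.exp (-T ^ 2 / 2) * Real.exp (-(T * μ)) := by ring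
      _ ≤ Real.sqrt (2 * π) * Real.exp (-T + 1/2) * b * Real.exp (-(T * μ)) := hq2
      _ = (Real.sqrt (2 * π) * Real.exp (1/2)) * b * Real.exp ((μ + 1) * (-T)) := hcomb
      _ ≤ (Real.sqrt (2 * π) * Real.exp (1/2)) * b * Real.exp ((μ + 1) * Real.sqrt (2 * Real.log (1/b))) := by
          exact mul_le_mul_of_nonneg_left hexpmono (mul_nonneg (by positivity) hb.1.le)
      _ ≤ M * b * Real.exp ((μ + 1) * Real.sqrt (2 * Real.log (1/b))) := by
          apply mul_le_mul_of_nonneg_right _ (Real.exp_pos _).le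
          exact mul_le_mul_of_nonneg_right hMge hb.1.le
  · -- easy case: T > -μ
    have hPhiμ : 0 < stdNormalCDF (-μ) := Phi_pos_of_nonpos (by linarith)
    have hble : stdNormalCDF (-μ) ≤ b := by
      rw [← hPhiT]; exact Phi_mono (by linarith)
    have h1 : stdNormalCDF (T + μ) ≤ 1 := Phi_le_one _
    have h2 : (1:ℝ) ≤ (stdNormalCDF (-μ))⁻¹ * b := by
      rw [← div_eq_inv_mul, le_div_iff₀ hPhiμ, one_mul]; exact hble
    have hMge : (stdNormalCDF (-μ))⁻¹ ≤ M := le_max_right _ _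
    have hexp1 : (1:ℝ) ≤ Real.exp ((μ + 1) * Real.sqrt (2 * Real.log (1/b))) := by
      rw [Real.one_le_exp_iff]
      exact mul_nonneg (by linarith) hSnn
    calc stdNormalCDF (T + μ) ≤ 1 := h1
      _ ≤ (stdNormalCDF (-μ))⁻¹ * b := h2
      _ ≤ M * b := mul_le_mul_of_nonneg_right hMge hb.1.le
      _ = M * b * 1 := by ring
      _ ≤ M * b * Real.exp ((μ + 1) * Real.sqrt (2 * Real.log (1/b))) := by
          apply mul_le_mul_of_nonneg_left hexp1
          have : (0:ℝ) < M := lt_of_lt_of_le (inv_pos.2 hPhiμ) hMge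
          nlinarith [hb.1]

/-- Bound on the weight `c = exp(-μ Φ⁻¹(b) - μ²/2)`. -/
lemma CB {μ b : ℝ} (hμ : 0 ≤ μ) (hb : b ∈ Ioo (0:ℝ) (1/2)) :
    Real.exp (-(μ * stdNormalQuantile b) - μ ^ 2 / 2)
      ≤ Real.exp (μ * Real.sqrt (2 * Real.log (1 / b))) := by
  apply Real.exp_le_exp.2
  have h1 := QB1 hb
  have h2 : -(μ * stdNormalQuantile b) ≤ μ * Real.sqrt (2 * Real.log (1 / b)) := by
    rw [← mul_neg]
    exact mul_le_mul_of_nonneg_left (by linarith) hμ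
  nlinarith [sq_nonneg μ]


lemma summable_shift {p : ℝ} (hp : 1 < p) :
    Summable (fun i : ℕ => ((i : ℝ) + 1) ^ (-p)) := by
  have h : Summable (fun n : ℕ => (n : ℝ) ^ (-p)) :=
    Real.summable_nat_rpow.mpr (by linarith)
  have h2 := (summable_nat_add_iff 1).mpr h
  refine h2.congr fun n => ?_
  push_cast
  rfl

lemma zeta_ge_one {q : ℝ} (hq : 1 < q) : 1 ≤ zetaReal q := by
  have h0 : ((0:ℕ):ℝ) + 1 = 1 := by norm_num
  have := Summable.le_tsum (summable_shift hq) 0 (fun j _ => Real.rpow_nonneg (by positivity) _)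
  rwa [h0, Real.one_rpow] at this

lemma zeta_pos {q : ℝ} (hq : 1 < q) : 0 < zetaReal q := lt_of_lt_of_le one_pos (zeta_ge_one hq)

lemma sqrt_add_le {x y : ℝ} (hx : 0 ≤ x) (hy : 0 ≤ y) :
    Real.sqrt (x + y) ≤ Real.sqrt x + Real.sqrt y := by
  calc Real.sqrt (x + y) ≤ Real.sqrt ((Real.sqrt x + Real.sqrt y) ^ 2) := by
        apply Real.sqrt_le_sqrt
        nlinarith [Real.sq_sqrt hx, Real.sq_sqrt hy, Real.sqrt_nonneg x, Real.sqrt_nonneg y,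
          mul_nonneg (Real.sqrt_nonneg x) (Real.sqrt_nonneg y)]
    _ = Real.sqrt x + Real.sqrt y := Real.sqrt_sq (by positivity)

lemma sumcore {q K : ℝ} (hq : 1 < q) (hK : 0 ≤ K) :
    Summable (fun i : ℕ => ((i : ℝ) + 1) ^ (-q)
      * Real.exp (K * Real.sqrt (Real.log ((i : ℝ) + 1)))) := by
  obtain ⟨δ, hδdef⟩ : ∃ d : ℝ, d = (q - 1) / 2 := ⟨_, rfl⟩
  have hδ : 0 < δ := by rw [hδdef]; linarith
  have htarget : Summable (fun i : ℕ => Real.exp (K ^ 2 / (4 * δ)) * ((i : ℝ) + 1) ^ (δ - q)) := by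
    apply Summable.mul_left
    have : δ - q = -((q + 1) / 2) := by rw [hδdef]; ring
    rw [this]
    exact summable_shift (by linarith)
  apply Summable.of_nonneg_of_le (fun i => by positivity) _ htarget
  intro i
  have hpos : (0:ℝ) < (i : ℝ) + 1 := by positivity
  set L : ℝ := Real.log ((i : ℝ) + 1) with hLdef
  have hL : 0 ≤ L := Real.log_nonneg (by push_cast; linarith)
  have hKL : K * Real.sqrt L ≤ δ * L + K ^ 2 / (4 * δ) := by
    have hs := Real.sq_sqrt hL
    have hsn := Real.sqrt_nonneg L
    have key : 0 ≤ (2 * δ * Real.sqrt L - K) ^ 2 := sq_nonneg _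
    have h4δ : 0 < 4 * δ := by linarith
    have key2 : (2 * δ * Real.sqrt L - K) ^ 2
        = 4 * δ ^ 2 * L - 4 * δ * (K * Real.sqrt L) + K ^ 2 := by
      linear_combination (4 * δ ^ 2) * hs
    have hδ0 : δ ≠ 0 := ne_of_gt hδ
    rw [show δ * L + K ^ 2 / (4 * δ) = (δ * L * (4 * δ) + K ^ 2) / (4 * δ) by
      rw [eq_div_iff (ne_of_gt h4δ)]; field_simp, le_div_iff₀ h4δ]
    nlinarith [key, key2]
  have hexp : Real.exp (K * Real.sqrt L) ≤ Real.exp (K ^ 2 / (4 * δ)) * ((i : ℝ) + 1) ^ δ := by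
    calc Real.exp (K * Real.sqrt L) ≤ Real.exp (δ * L + K ^ 2 / (4 * δ)) := Real.exp_le_exp.2 hKL
      _ = Real.exp (K ^ 2 / (4 * δ)) * Real.exp (δ * L) := by rw [← Real.exp_add]; ring_nf
      _ = Real.exp (K ^ 2 / (4 * δ)) * ((i : ℝ) + 1) ^ δ := by
          rw [Real.rpow_def_of_pos hpos, mul_comm L δ]
  calc ((i : ℝ) + 1) ^ (-q) * Real.exp (K * Real.sqrt L)
      ≤ ((i : ℝ) + 1) ^ (-q) * (Real.exp (K ^ 2 / (4 * δ)) * ((i : ℝ) + 1) ^ δ) := by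
        apply mul_le_mul_of_nonneg_left hexp (Real.rpow_nonneg hpos.le _)
    _ = Real.exp (K ^ 2 / (4 * δ)) * (((i : ℝ) + 1) ^ (-q) * ((i : ℝ) + 1) ^ δ) := by ring
    _ = Real.exp (K ^ 2 / (4 * δ)) * ((i : ℝ) + 1) ^ (δ - q) := by
        rw [← Real.rpow_add hpos]; ring_nf


lemma cross {x y q q' : ℝ} (hx : 1 ≤ x) (hxy : x ≤ y) (hqq' : q ≤ q') :
    x ^ (-q) * y ^ (-q') ≤ x ^ (-q') * y ^ (-q) := by
  have hx0 : (0:ℝ) < x := lt_of_lt_of_le one_pos hx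
  have hy0 : (0:ℝ) < y := lt_of_lt_of_le hx0 hxy
  have h1 : y ^ (q - q') ≤ x ^ (q - q') :=
    Real.rpow_le_rpow_of_nonpos hx0 hxy (by linarith)
  have e1 : x ^ (-q') = x ^ (-q) * x ^ (q - q') := by
    rw [← Real.rpow_add hx0]; ring_nf
  have e2 : y ^ (-q') = y ^ (-q) * y ^ (q - q') := by
    rw [← Real.rpow_add hy0]; ring_nf
  rw [e1, e2]
  have hxq : (0:ℝ) ≤ x ^ (-q) := Real.rpow_nonneg hx0.le _
  have hyq : (0:ℝ) ≤ y ^ (-q) := Real.rpow_nonneg hy0.le _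
  calc x ^ (-q) * (y ^ (-q) * y ^ (q - q'))
      = (x ^ (-q) * y ^ (-q)) * y ^ (q - q') := by ring
    _ ≤ (x ^ (-q) * y ^ (-q)) * x ^ (q - q') :=
        mul_le_mul_of_nonneg_left h1 (mul_nonneg hxq hyq)
    _ = x ^ (-q) * x ^ (q - q') * y ^ (-q) := by ring

lemma maj {q q' : ℝ} (hq : 1 < q) (hqq' : q ≤ q') (n : ℕ) :
    (∑ i ∈ Finset.range n, ((i:ℝ) + 1) ^ (-q)) * zetaReal q'
      ≤ (∑ i ∈ Finset.range n, ((i:ℝ) + 1) ^ (-q')) * zetaReal q := by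
  have hq' : 1 < q' := lt_of_lt_of_le hq hqq'
  have hS : ∀ p : ℝ, 1 < p → (∑ i ∈ Finset.range n, ((i:ℝ) + 1) ^ (-p))
      + ∑' i : ℕ, (((i + n : ℕ) : ℝ) + 1) ^ (-p) = zetaReal p := fun p hp =>
    Summable.sum_add_tsum_nat_add n (summable_shift hp)
  have hTs : ∀ p : ℝ, 1 < p → Summable (fun i : ℕ => (((i + n : ℕ) : ℝ) + 1) ^ (-p)) :=
    fun p hp => (summable_nat_add_iff n).mpr (summable_shift hp)
  have key : (∑ i ∈ Finset.range n, ((i:ℝ) + 1) ^ (-q)) * (∑' i : ℕ, (((i + n : ℕ) : ℝ) + 1) ^ (-q'))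
      ≤ (∑ i ∈ Finset.range n, ((i:ℝ) + 1) ^ (-q')) * (∑' i : ℕ, (((i + n : ℕ) : ℝ) + 1) ^ (-q)) := by
    rw [Finset.sum_mul, Finset.sum_mul]
    apply Finset.sum_le_sum
    intro i hi
    have hin : i < n := Finset.mem_range.mp hi
    rw [← tsum_mul_left, ← tsum_mul_left]
    apply Summable.tsum_le_tsum _ ((hTs q' hq').mul_left _) ((hTs q hq).mul_left _)
    intro j
    apply cross (by push_cast; linarith [Nat.cast_nonneg (α := ℝ) i])
      (by push_cast; have : (i:ℝ) ≤ (j:ℝ) + (n:ℝ) := by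
            have h1 : (i:ℝ) ≤ (n:ℝ) := by exact_mod_cast hin.le
            have h2 : (0:ℝ) ≤ (j:ℝ) := Nat.cast_nonneg j
            linarith
          linarith) hqq'
  rw [← hS q hq, ← hS q' hq']
  nlinarith [key]

lemma abel {c d : ℕ → ℝ} (hc : Monotone c)
    (hA : ∀ n, 0 ≤ ∑ i ∈ Finset.range n, d i) (n : ℕ) :
    ∑ i ∈ Finset.range n, c i * d i ≤ c n * ∑ i ∈ Finset.range n, d i := by
  induction n with
  | zero => simp
  | succ n ih =>
    rw [Finset.sum_range_succ, Finset.sum_range_succ]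
    have hA1 := hA (n + 1)
    rw [Finset.sum_range_succ] at hA1
    calc (∑ i ∈ Finset.range n, c i * d i) + c n * d n
        ≤ c n * (∑ i ∈ Finset.range n, d i) + c n * d n := by linarith
      _ = c n * ((∑ i ∈ Finset.range n, d i) + d n) := by ring
      _ ≤ c (n + 1) * ((∑ i ∈ Finset.range n, d i) + d n) :=
          mul_le_mul_of_nonneg_right (hc (Nat.le_succ n)) hA1


/-- The alpha-spending levels. -/
noncomputable def bseq (α q : ℝ) (i : ℕ) : ℝ := α * ((i : ℝ) + 1) ^ (-q) / zetaReal q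

section bseqFacts

variable {α q : ℝ} (hα : α ∈ Ioo (0:ℝ) (1/2)) (hq : 1 < q)
include hα hq

lemma bseq_mem (i : ℕ) : bseq α q i ∈ Ioo (0:ℝ) (1/2) := by
  have hz := zeta_pos hq
  have hz1 := zeta_ge_one hq
  have hx : (0:ℝ) < (i:ℝ) + 1 := by positivity
  have hxle : ((i:ℝ) + 1) ^ (-q) ≤ 1 :=
    Real.rpow_le_one_of_one_le_of_nonpos (by push_cast; linarith [Nat.cast_nonneg (α := ℝ) i])
      (by linarith)
  have hxpos : (0:ℝ) < ((i:ℝ) + 1) ^ (-q) := Real.rpow_pos_of_pos hx _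
  constructor
  · unfold bseq
    exact div_pos (mul_pos hα.1 hxpos) hz
  · unfold bseq
    rw [div_lt_iff₀ hz]
    nlinarith [hα.2, hα.1]

lemma bseq_le (i : ℕ) : bseq α q i ≤ α * ((i : ℝ) + 1) ^ (-q) := by
  have hz1 := zeta_ge_one hq
  have hx : (0:ℝ) < (i:ℝ) + 1 := by positivity
  have hxpos : (0:ℝ) < ((i:ℝ) + 1) ^ (-q) := Real.rpow_pos_of_pos hx _
  unfold bseq
  apply div_le_self (mul_nonneg hα.1.le hxpos.le) hz1

lemma bseq_anti (i : ℕ) : bseq α q (i + 1) ≤ bseq α q i := by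
  have hz := zeta_pos hq
  have hx2 : ((i:ℝ) + 1) + 1 = (i:ℝ) + 2 := by ring
  have hnum : (((i + 1 : ℕ):ℝ) + 1) ^ (-q) ≤ (((i : ℕ):ℝ) + 1) ^ (-q) := by
    push_cast
    exact Real.rpow_le_rpow_of_nonpos (by positivity) (by linarith) (by linarith)
  unfold bseq
  rw [div_le_div_iff₀ hz hz]
  have h1 := mul_le_mul_of_nonneg_left hnum hα.1.le
  exact mul_le_mul_of_nonneg_right h1 hz.le

lemma bseq_summable : Summable (bseq α q) := by
  apply ((summable_shift hq).mul_left (α / zetaReal q)).congr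
  intro i
  unfold bseq
  ring

lemma bseq_tsum : ∑' i, bseq α q i = α := by
  have hz := zeta_pos hq
  have h1 : ∀ i : ℕ, bseq α q i = (α / zetaReal q) * ((i:ℝ) + 1) ^ (-q) := by
    intro i; unfold bseq; ring
  rw [tsum_congr h1, tsum_mul_left]
  rw [show (∑' i : ℕ, ((i:ℝ) + 1) ^ (-q)) = zetaReal q from rfl]
  field_simp

lemma bseq_sqrtlog (i : ℕ) :
    Real.sqrt (2 * Real.log (1 / bseq α q i))
      ≤ Real.sqrt (2 * Real.log (zetaReal q / α))
        + Real.sqrt (2 * q) * Real.sqrt (Real.log ((i:ℝ) + 1)) := by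
  have hz := zeta_pos hq
  have hz1 := zeta_ge_one hq
  have hx : (0:ℝ) < (i:ℝ) + 1 := by positivity
  have hxpos : (0:ℝ) < ((i:ℝ) + 1) ^ (-q) := Real.rpow_pos_of_pos hx _
  have hL : (0:ℝ) ≤ Real.log ((i:ℝ) + 1) :=
    Real.log_nonneg (by push_cast; linarith [Nat.cast_nonneg (α := ℝ) i])
  have hA : (0:ℝ) ≤ Real.log (zetaReal q / α) := by
    apply Real.log_nonneg
    rw [le_div_iff₀ hα.1]
    nlinarith [hα.2]
  have hlog : Real.log (1 / bseq α q i)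
      = Real.log (zetaReal q / α) + q * Real.log ((i:ℝ) + 1) := by
    have h1 : Real.log (bseq α q i)
        = Real.log α + (-q) * Real.log ((i:ℝ) + 1) - Real.log (zetaReal q) := by
      unfold bseq
      rw [Real.log_div (ne_of_gt (mul_pos hα.1 hxpos)) (ne_of_gt hz),
        Real.log_mul (ne_of_gt hα.1) (ne_of_gt hxpos), Real.log_rpow hx]
    have h2 : Real.log (zetaReal q / α) = Real.log (zetaReal q) - Real.log α :=
      Real.log_div (ne_of_gt hz) (ne_of_gt hα.1)
    rw [one_div, Real.log_inv, h1, h2]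
    ring
  rw [hlog, show 2 * (Real.log (zetaReal q / α) + q * Real.log ((i:ℝ) + 1))
    = 2 * Real.log (zetaReal q / α) + (2 * q) * Real.log ((i:ℝ) + 1) by ring]
  calc Real.sqrt (2 * Real.log (zetaReal q / α) + (2 * q) * Real.log ((i:ℝ) + 1))
      ≤ Real.sqrt (2 * Real.log (zetaReal q / α)) + Real.sqrt ((2 * q) * Real.log ((i:ℝ) + 1)) :=
        sqrt_add_le (by linarith) (by nlinarith)
    _ = Real.sqrt (2 * Real.log (zetaReal q / α))
        + Real.sqrt (2 * q) * Real.sqrt (Real.log ((i:ℝ) + 1)) := by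
        rw [Real.sqrt_mul (show (0:ℝ) ≤ 2 * q by linarith) (Real.log ((i:ℝ) + 1))]

end bseqFacts


/-- The key "chord slope" inequality for `g(x) = Φ(Φ⁻¹(x)+μ)`. -/
lemma KEY {μ x y : ℝ} (hμ : 0 < μ) (hx : x ∈ Ioo (0:ℝ) (1/2)) (hy : y ∈ Ioo (0:ℝ) (1/2)) :
    stdNormalCDF (stdNormalQuantile x + μ) - stdNormalCDF (stdNormalQuantile y + μ)
      ≤ Real.exp (-(μ * stdNormalQuantile y) - μ ^ 2 / 2) * (x - y) := by
  have hx1 : x ∈ Ioo (0:ℝ) 1 := ⟨hx.1, by linarith [hx.2]⟩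
  have hy1 : y ∈ Ioo (0:ℝ) 1 := ⟨hy.1, by linarith [hy.2]⟩
  have hPx : stdNormalCDF (stdNormalQuantile x) = x := Phi_quantile hx1
  have hPy : stdNormalCDF (stdNormalQuantile y) = y := Phi_quantile hy1
  rcases le_total y x with hxy | hxy
  · have hQ : stdNormalQuantile y ≤ stdNormalQuantile x := quantile_mono hy1 hx1 hxy
    have := I1 (μ := μ) hμ.le hQ
    rw [hPx, hPy] at this
    linarith
  · have hQ : stdNormalQuantile x ≤ stdNormalQuantile y := quantile_mono hx1 hy1 hxy
    have := I2 (μ := μ) hμ.le hQ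
    rw [hPx, hPy] at this
    linarith

section Summability

variable {α μA q : ℝ} (hα : α ∈ Ioo (0:ℝ) (1/2)) (hμA : 0 < μA) (hq : 1 < q)
include hα hq

/-- Exponential factor bound. -/
lemma expfac {K : ℝ} (hK : 0 ≤ K) (i : ℕ) :
    Real.exp (K * Real.sqrt (2 * Real.log (1 / bseq α q i)))
      ≤ Real.exp (K * Real.sqrt (2 * Real.log (zetaReal q / α)))
        * Real.exp ((K * Real.sqrt (2 * q)) * Real.sqrt (Real.log ((i:ℝ) + 1))) := by
  rw [← Real.exp_add]
  apply Real.exp_le_exp.2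
  have h := bseq_sqrtlog hα hq i
  nlinarith [mul_le_mul_of_nonneg_left h hK]

include hμA in
/-- Summability of the true-discovery series. -/
lemma g_summable :
    Summable (fun i : ℕ => stdNormalCDF (stdNormalQuantile (bseq α q i) + μA)) := by
  set M := max (Real.sqrt (2 * π) * Real.exp (1/2)) (stdNormalCDF (-μA))⁻¹ with hM
  have hM0 : 0 < M :=
    lt_of_lt_of_le (by positivity) (le_max_left _ _)
  set C := M * α * Real.exp ((μA + 1) * Real.sqrt (2 * Real.log (zetaReal q / α))) with hC
  apply Summable.of_nonneg_of_le (fun i => Phi_nonneg _)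
    (f := fun i : ℕ => C * (((i:ℝ) + 1) ^ (-q)
      * Real.exp (((μA + 1) * Real.sqrt (2 * q)) * Real.sqrt (Real.log ((i:ℝ) + 1)))))
  · intro i
    have hb := bseq_mem hα hq i
    have hgb := GB hμA hb
    have hexp := expfac hα hq (K := μA + 1) (by linarith) i
    have hble := bseq_le hα hq i
    have hxpos : (0:ℝ) < ((i:ℝ) + 1) ^ (-q) := Real.rpow_pos_of_pos (by positivity) _
    calc stdNormalCDF (stdNormalQuantile (bseq α q i) + μA)
        ≤ M * bseq α q i * Real.exp ((μA + 1) * Real.sqrt (2 * Real.log (1 / bseq α q i))) := hgb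
      _ ≤ M * (α * ((i:ℝ) + 1) ^ (-q))
            * (Real.exp ((μA + 1) * Real.sqrt (2 * Real.log (zetaReal q / α)))
              * Real.exp (((μA + 1) * Real.sqrt (2 * q)) * Real.sqrt (Real.log ((i:ℝ) + 1)))) := by
          apply mul_le_mul
          · exact mul_le_mul_of_nonneg_left hble hM0.le
          · exact hexp
          · positivity
          · exact mul_nonneg hM0.le (mul_nonneg hα.1.le hxpos.le)
      _ = C * (((i:ℝ) + 1) ^ (-q)
            * Real.exp (((μA + 1) * Real.sqrt (2 * q)) * Real.sqrt (Real.log ((i:ℝ) + 1)))) := by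
          rw [hC]; ring
  · exact (sumcore hq (mul_nonneg (by linarith) (Real.sqrt_nonneg _))).mul_left C

include hμA in
/-- Summability of weighted series `c_i * x_i` where `x_i ≤ α (i+1)^{-q}` and the
weights come from level `q`. -/
lemma cb_summable {x : ℕ → ℝ} (hx : ∀ i, 0 ≤ x i) (hxle : ∀ i, x i ≤ α * ((i:ℝ) + 1) ^ (-q)) :
    Summable (fun i : ℕ =>
      Real.exp (-(μA * stdNormalQuantile (bseq α q i)) - μA ^ 2 / 2) * x i) := by
  set C := α * Real.exp (μA * Real.sqrt (2 * Real.log (zetaReal q / α))) with hC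
  apply Summable.of_nonneg_of_le (fun i => mul_nonneg (Real.exp_pos _).le (hx i))
    (f := fun i : ℕ => C * (((i:ℝ) + 1) ^ (-q)
      * Real.exp ((μA * Real.sqrt (2 * q)) * Real.sqrt (Real.log ((i:ℝ) + 1)))))
  · intro i
    have hb := bseq_mem hα hq i
    have hcb := CB hμA.le hb
    have hexp := expfac hα hq (K := μA) hμA.le i
    have hxpos : (0:ℝ) < ((i:ℝ) + 1) ^ (-q) := Real.rpow_pos_of_pos (by positivity) _
    calc Real.exp (-(μA * stdNormalQuantile (bseq α q i)) - μA ^ 2 / 2) * x i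
        ≤ (Real.exp (μA * Real.sqrt (2 * Real.log (zetaReal q / α)))
            * Real.exp ((μA * Real.sqrt (2 * q)) * Real.sqrt (Real.log ((i:ℝ) + 1))))
          * (α * ((i:ℝ) + 1) ^ (-q)) := by
          apply mul_le_mul (hcb.trans hexp) (hxle i) (hx i)
          positivity
      _ = C * (((i:ℝ) + 1) ^ (-q)
            * Real.exp ((μA * Real.sqrt (2 * q)) * Real.sqrt (Real.log ((i:ℝ) + 1)))) := by
          rw [hC]; ring
  · exact (sumcore hq (mul_nonneg hμA.le (Real.sqrt_nonneg _))).mul_left C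

end Summability


set_option maxHeartbeats 2000000 in
lemma core_antitone {α μA q q' : ℝ} (hα : α ∈ Ioo (0:ℝ) (1/2)) (hμA : 0 < μA)
    (hq : 1 < q) (hqq' : q ≤ q') :
    ∑' i : ℕ, stdNormalCDF (stdNormalQuantile (bseq α q' i) + μA)
      ≤ ∑' i : ℕ, stdNormalCDF (stdNormalQuantile (bseq α q i) + μA) := by
  have hq' : 1 < q' := lt_of_lt_of_le hq hqq'
  set g : ℝ → ℝ := fun x => stdNormalCDF (stdNormalQuantile x + μA) with hgdef
  set a : ℕ → ℝ := fun i => bseq α q' i with hadef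
  set b : ℕ → ℝ := fun i => bseq α q i with hbdef
  set c : ℕ → ℝ := fun i => Real.exp (-(μA * stdNormalQuantile (b i)) - μA ^ 2 / 2) with hcdef
  set d : ℕ → ℝ := fun i => a i - b i with hddef
  have hamem : ∀ i, a i ∈ Ioo (0:ℝ) (1/2) := fun i => bseq_mem hα hq' i
  have hbmem : ∀ i, b i ∈ Ioo (0:ℝ) (1/2) := fun i => bseq_mem hα hq i
  have hga : Summable (fun i => g (a i)) := g_summable hα hμA hq'
  have hgb : Summable (fun i => g (b i)) := g_summable hα hμA hq
  have hkey : ∀ i, g (a i) - g (b i) ≤ c i * d i := fun i =>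
    KEY hμA (hamem i) (hbmem i)
  have hale : ∀ i, a i ≤ α * ((i:ℝ) + 1) ^ (-q) := by
    intro i
    refine le_trans (bseq_le hα hq' i) ?_
    apply mul_le_mul_of_nonneg_left _ hα.1.le
    apply Real.rpow_le_rpow_of_exponent_le
      (by push_cast; linarith [Nat.cast_nonneg (α := ℝ) i]) (by linarith)
  have hca : Summable (fun i => c i * a i) :=
    cb_summable hα hμA hq (fun i => (hamem i).1.le) hale
  have hcb : Summable (fun i => c i * b i) :=
    cb_summable hα hμA hq (fun i => (hbmem i).1.le) (fun i => bseq_le hα hq i)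
  have hcd : Summable (fun i => c i * d i) :=
    (hca.sub hcb).congr fun i => (mul_sub (c i) (a i) (b i)).symm
  have hsa : Summable a := bseq_summable hα hq'
  have hsb : Summable b := bseq_summable hα hq
  have hsd : Summable d := hsa.sub hsb
  have hz := zeta_pos hq
  have hz' := zeta_pos hq'
  have hA : ∀ n, 0 ≤ ∑ i ∈ Finset.range n, d i := by
    intro n
    have hmaj := maj hq hqq' n
    have h1 : ∑ i ∈ Finset.range n, d i
        = (α / zetaReal q') * (∑ i ∈ Finset.range n, ((i:ℝ) + 1) ^ (-q'))
          - (α / zetaReal q) * (∑ i ∈ Finset.range n, ((i:ℝ) + 1) ^ (-q)) := by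
      rw [Finset.sum_sub_distrib, Finset.mul_sum, Finset.mul_sum]
      congr 1
      · exact Finset.sum_congr rfl fun i _ => by simp only [hadef, bseq]; ring
      · exact Finset.sum_congr rfl fun i _ => by simp only [hbdef, bseq]; ring
    rw [h1, sub_nonneg, div_mul_eq_mul_div, div_mul_eq_mul_div, div_le_div_iff₀ hz hz']
    nlinarith [mul_le_mul_of_nonneg_left hmaj hα.1.le]
  have hcmono : Monotone c := by
    apply monotone_nat_of_le_succ
    intro i
    apply Real.exp_le_exp.2
    have hb1 : b (i + 1) ≤ b i := bseq_anti hα hq i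
    have hQ : stdNormalQuantile (b (i + 1)) ≤ stdNormalQuantile (b i) :=
      quantile_mono ⟨(hbmem (i+1)).1, by linarith [(hbmem (i+1)).2]⟩
        ⟨(hbmem i).1, by linarith [(hbmem i).2]⟩ hb1
    nlinarith [mul_le_mul_of_nonneg_left hQ hμA.le]
  have htsumd : ∑' i, d i = 0 := by
    have := Summable.tsum_sub hsa hsb
    rw [hadef, hbdef] at this
    simp only [hddef]
    rw [this, bseq_tsum hα hq', bseq_tsum hα hq, sub_self]
  have hcd0 : ∑' i, c i * d i ≤ 0 := by
    have hP : Tendsto (fun n => ∑ i ∈ Finset.range n, c i * d i) atTop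
        (𝓝 (∑' i, c i * d i)) := hcd.hasSum.tendsto_sum_nat
    have hT : Tendsto (fun n => ∑' i : ℕ, c (i + n) * b (i + n)) atTop (𝓝 0) :=
      tendsto_sum_nat_add (f := fun i => c i * b i)
    apply le_of_tendsto_of_tendsto' hP hT
    intro n
    have hsb_sh : Summable (fun i => b (i + n)) := (summable_nat_add_iff n).mpr hsb
    have hsa_sh : Summable (fun i => a (i + n)) := (summable_nat_add_iff n).mpr hsa
    have hcb_sh : Summable (fun i => c (i + n) * b (i + n)) :=
      (summable_nat_add_iff n).mpr hcb
    have hAn : ∑ i ∈ Finset.range n, d i = ∑' i : ℕ, (b (i + n) - a (i + n)) := by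
      have h := Summable.sum_add_tsum_nat_add n hsd
      rw [htsumd] at h
      have h2 : ∑' i : ℕ, -(d (i + n)) = -∑' i : ℕ, d (i + n) := tsum_neg
      have h3 : ∑' i : ℕ, (b (i + n) - a (i + n)) = ∑' i : ℕ, -(d (i + n)) :=
        tsum_congr fun i => by simp only [hddef]; ring
      rw [h3, h2]
      linarith
    have hstep1 : ∑ i ∈ Finset.range n, d i ≤ ∑' i : ℕ, b (i + n) := by
      rw [hAn]
      apply Summable.tsum_le_tsum _ (hsb_sh.sub hsa_sh) hsb_sh
      intro i
      have := (hamem (i + n)).1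
      linarith
    have hcn : (0:ℝ) < c n := Real.exp_pos _
    calc ∑ i ∈ Finset.range n, c i * d i
        ≤ c n * ∑ i ∈ Finset.range n, d i := abel hcmono hA n
      _ ≤ c n * ∑' i : ℕ, b (i + n) := mul_le_mul_of_nonneg_left hstep1 hcn.le
      _ = ∑' i : ℕ, c n * b (i + n) := (tsum_mul_left).symm
      _ ≤ ∑' i : ℕ, c (i + n) * b (i + n) := by
          apply Summable.tsum_le_tsum _ (hsb_sh.mul_left (c n)) hcb_sh
          intro i
          exact mul_le_mul_of_nonneg_right (hcmono (Nat.le_add_left n i)) (hbmem (i + n)).1.le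
  have h1 : ∑' i, (g (a i) - g (b i)) ≤ ∑' i, c i * d i :=
    Summable.tsum_le_tsum hkey (hga.sub hgb) hcd
  rw [Summable.tsum_sub hga hgb] at h1
  have : ∑' i, g (a i) - ∑' i, g (b i) ≤ 0 := by linarith
  linarith

end AlphaSpendAux


open AlphaSpendAux in
/-- **The total expected number of true discoveries of Alpha-Spending with `q`-series is
finite and decreasing in `q`.** For `f_∞(q) = ∑_{i=1}^∞ π_A Φ(Φ⁻¹(α i^{-q}/ζ(q)) + μ_A)`,
the series converges for every `q > 1`, and `f_∞` is monotonically decreasing on `(1,∞)`. -/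
theorem alpha_spending_q_series_total_power_finite_and_decreasing
    (α μA πA : ℝ) (hα : α ∈ Set.Ioo (0 : ℝ) (1 / 2)) (hμA : 0 < μA)
    (hπA : πA ∈ Set.Ioo (0 : ℝ) 1)
    (finf : ℝ → ℝ)
    (hfinf : ∀ q, finf q = ∑' i : ℕ,
      πA * stdNormalCDF (stdNormalQuantile (α * ((i : ℝ) + 1) ^ (-q) / zetaReal q) + μA)) :
    (∀ q ∈ Set.Ioi (1 : ℝ), Summable (fun i : ℕ =>
        πA * stdNormalCDF (stdNormalQuantile (α * ((i : ℝ) + 1) ^ (-q) / zetaReal q) + μA))) ∧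
      AntitoneOn finf (Set.Ioi (1 : ℝ)) := by
  have hbeq : ∀ q, (fun i : ℕ =>
      πA * stdNormalCDF (stdNormalQuantile (α * ((i : ℝ) + 1) ^ (-q) / zetaReal q) + μA))
      = fun i : ℕ => πA * stdNormalCDF (stdNormalQuantile (bseq α q i) + μA) := by
    intro q; funext i; rfl
  constructor
  · intro q hq
    rw [hbeq q]
    exact (g_summable hα hμA hq).mul_left πA
  · intro q hq q' hq' hqq'
    rw [hfinf q, hfinf q']
    have h1 : ∀ p : ℝ, (∑' i : ℕ,
        πA * stdNormalCDF (stdNormalQuantile (α * ((i : ℝ) + 1) ^ (-p) / zetaReal p) + μA))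
        = πA * ∑' i : ℕ, stdNormalCDF (stdNormalQuantile (bseq α p i) + μA) := by
      intro p
      rw [hbeq p]
      exact tsum_mul_left
    rw [h1 q, h1 q']
    exact mul_le_mul_of_nonneg_left (core_antitone hα hμA hq hqq') hπA.1.le
end
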